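/- arXiv:1301.0541 — 3 statements merged into one kernel-verified Lean document; each statement's English description precedes it below -/
import Mathlib

section
/- Let F and F' be two axis-aligned frames such that ℓ(F), r(F), ℓ(F'), r(F') are pairwise distinct and b(F), t(F), b(F'), t(F') are pairwise distinct. Then F ∩ F' ≠ ∅ if and only if rect(F) ∩ rect(F') ≠ ∅ and neither rect(F) ⊆ rect(F') nor rect(F') ⊆ rect(F). -/
open Set

/-- An axis-aligned rectangle `[l, r] × [b, t]` with `l < r` and `b < t`. -/
structure Rect where
  l : ℝ
  r : ℝ
  b : ℝ
  t : ℝ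
  hlr : l < r
  hbt : b < t

noncomputable instance : DecidableEq Rect := Classical.decEq _

/-- The filling rectangle, as a subset of the plane. -/
def Rect.toSet (R : Rect) : Set (ℝ × ℝ) := Set.Icc R.l R.r ×ˢ Set.Icc R.b R.t

/-- The frame: the boundary (topological frontier) of the filling rectangle. -/
def Rect.frame (R : Rect) : Set (ℝ × ℝ) := frontier R.toSet

/-- A family of frames is in general position. -/
def GenPos (𝔉 : Finset Rect) : Prop :=
  ∀ F ∈ 𝔉, ∀ F' ∈ 𝔉, F ≠ F' →
    [F.l, F.r, F'.l, F'.r].Pairwise (· ≠ ·) ∧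
    [F.b, F.t, F'.b, F'.t].Pairwise (· ≠ ·)

/-- The intersection graph of a family of frames. -/
def frameGraph (𝔉 : Finset Rect) : SimpleGraph {F : Rect // F ∈ 𝔉} where
  Adj F F' := F ≠ F' ∧ (F.1.frame ∩ F'.1.frame).Nonempty
  symm := by
    constructor
    intro a b h
    exact ⟨h.1.symm, by rw [Set.inter_comm]; exact h.2⟩
  loopless := by constructor; intro a h; exact h.1 rfl

/-- The intersection of frames `F` and `F'` is rightward-directed. -/
def RightDir (F F' : Rect) : Prop :=
  F.l < F'.l ∧ F'.l < F.r ∧ F.r < F'.r ∧ F.b < F'.b ∧ F'.b < F'.t ∧ F'.t < F.t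

/-- The intersection of frames `F` and `F'` is leftward-directed. -/
def LeftDir (F F' : Rect) : Prop :=
  F'.l < F.l ∧ F.l < F'.r ∧ F'.r < F.r ∧ F.b < F'.b ∧ F'.b < F'.t ∧ F'.t < F.t

/-- The intersection of frames `F` and `F'` is upward-directed. -/
def UpDir (F F' : Rect) : Prop :=
  F.b < F'.b ∧ F'.b < F.t ∧ F.t < F'.t ∧ F.l < F'.l ∧ F'.l < F'.r ∧ F'.r < F.r

/-- The intersection of frames `F` and `F'` is downward-directed. -/
def DownDir (F F' : Rect) : Prop :=
  F'.b < F.b ∧ F.b < F'.t ∧ F'.t < F.t ∧ F.l < F'.l ∧ F'.l < F'.r ∧ F'.r < F.r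

/-- Any two intersecting frames of the family satisfy `P` (in one of the two orders). -/
def IntersectingPairsSatisfy (𝔉 : Finset Rect) (P : Rect → Rect → Prop) : Prop :=
  ∀ F ∈ 𝔉, ∀ F' ∈ 𝔉, F ≠ F' → (F.frame ∩ F'.frame).Nonempty → P F F' ∨ P F' F

def IsRightwardDirected (𝔉 : Finset Rect) : Prop := IntersectingPairsSatisfy 𝔉 RightDir

/-- A directed family of frames. -/
def IsDirectedFamily (𝔉 : Finset Rect) : Prop :=
  IntersectingPairsSatisfy 𝔉 RightDir ∨ IntersectingPairsSatisfy 𝔉 LeftDir ∨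
    IntersectingPairsSatisfy 𝔉 UpDir ∨ IntersectingPairsSatisfy 𝔉 DownDir

/-- `F` is enclosed by `F'`. -/
def Enclosed (F F' : Rect) : Prop :=
  F'.l < F.l ∧ F.r < F'.r ∧ F'.b < F.b ∧ F.t < F'.t

/-- A clean family of frames. -/
def Clean (𝔉 : Finset Rect) : Prop :=
  ¬ ∃ F₁ ∈ 𝔉, ∃ F₂ ∈ 𝔉, ∃ F₃ ∈ 𝔉, F₁ ≠ F₂ ∧
    (Rect.frame F₁ ∩ Rect.frame F₂).Nonempty ∧ Enclosed F₃ F₁ ∧ Enclosed F₃ F₂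

/-- The overlap graph of a family of rectangles: two rectangles are adjacent if they
intersect but neither is a subset of the other. -/
def overlapGraph (𝔉 : Finset Rect) : SimpleGraph {R : Rect // R ∈ 𝔉} where
  Adj R S := (R.1.toSet ∩ S.1.toSet).Nonempty ∧ ¬ R.1.toSet ⊆ S.1.toSet ∧ ¬ S.1.toSet ⊆ R.1.toSet
  symm := by
    constructor
    intro a b h
    exact ⟨by rw [Set.inter_comm]; exact h.1, h.2.2, h.2.1⟩
  loopless := by constructor; intro a h; exact h.2.1 subset_rfl

lemma Rect.frame_eq (R : Rect) :
    R.frame = Set.Icc R.l R.r ×ˢ ({R.b, R.t} : Set ℝ) ∪ ({R.l, R.r} : Set ℝ) ×ˢ Set.Icc R.b R.t := by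
  rw [Rect.frame, Rect.toSet, frontier_prod_eq, closure_Icc, closure_Icc,
    frontier_Icc R.hlr.le, frontier_Icc R.hbt.le]

lemma Rect.mem_frame_bot (R : Rect) {x : ℝ} (h1 : R.l ≤ x) (h2 : x ≤ R.r) :
    (x, R.b) ∈ R.frame := by
  rw [R.frame_eq]; exact Or.inl ⟨⟨h1, h2⟩, Or.inl rfl⟩

lemma Rect.mem_frame_top (R : Rect) {x : ℝ} (h1 : R.l ≤ x) (h2 : x ≤ R.r) :
    (x, R.t) ∈ R.frame := by
  rw [R.frame_eq]; exact Or.inl ⟨⟨h1, h2⟩, Or.inr rfl⟩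

lemma Rect.mem_frame_left (R : Rect) {y : ℝ} (h1 : R.b ≤ y) (h2 : y ≤ R.t) :
    (R.l, y) ∈ R.frame := by
  rw [R.frame_eq]; exact Or.inr ⟨Or.inl rfl, h1, h2⟩

lemma Rect.mem_frame_right (R : Rect) {y : ℝ} (h1 : R.b ≤ y) (h2 : y ≤ R.t) :
    (R.r, y) ∈ R.frame := by
  rw [R.frame_eq]; exact Or.inr ⟨Or.inr rfl, h1, h2⟩

lemma Rect.subset_iff {F F' : Rect} :
    F.toSet ⊆ F'.toSet ↔ F'.l ≤ F.l ∧ F.r ≤ F'.r ∧ F'.b ≤ F.b ∧ F.t ≤ F'.t := by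
  constructor
  · intro h
    have h1 := h (show (F.l, F.b) ∈ F.toSet from ⟨⟨le_refl _, F.hlr.le⟩, ⟨le_refl _, F.hbt.le⟩⟩)
    have h2 := h (show (F.r, F.t) ∈ F.toSet from ⟨⟨F.hlr.le, le_refl _⟩, ⟨F.hbt.le, le_refl _⟩⟩)
    obtain ⟨⟨a1, _⟩, ⟨b1, _⟩⟩ := h1
    obtain ⟨⟨_, a2⟩, ⟨_, b2⟩⟩ := h2
    exact ⟨a1, a2, b1, b2⟩
  · rintro ⟨ha, hb, hc, hd⟩ ⟨x, y⟩ ⟨⟨hx1, hx2⟩, ⟨hy1, hy2⟩⟩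
    exact ⟨⟨ha.trans hx1, hx2.trans hb⟩, ⟨hc.trans hy1, hy2.trans hd⟩⟩


/-- Two frames in general position intersect if and only if their filling rectangles
intersect and neither filling rectangle is contained in the other. -/
theorem stmt1 (F F' : Rect)
    (h1 : [F.l, F.r, F'.l, F'.r].Pairwise (· ≠ ·))
    (h2 : [F.b, F.t, F'.b, F'.t].Pairwise (· ≠ ·)) :
    F.frame ∩ F'.frame ≠ ∅ ↔
      ((F.toSet ∩ F'.toSet).Nonempty ∧ ¬ F.toSet ⊆ F'.toSet ∧ ¬ F'.toSet ⊆ F.toSet) := by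
  simp only [List.pairwise_cons, List.mem_cons, List.not_mem_nil] at h1 h2
  obtain ⟨ha, hb, hc, -⟩ := h1
  obtain ⟨hv1, hv2, hv3, -⟩ := h2
  have hll' : F.l ≠ F'.l := ha F'.l (by tauto)
  have hlr' : F.l ≠ F'.r := ha F'.r (by tauto)
  have hrl' : F.r ≠ F'.l := hb F'.l (by tauto)
  have hrr' : F.r ≠ F'.r := hb F'.r (by tauto)
  have hbb' : F.b ≠ F'.b := hv1 F'.b (by tauto)
  have hbt' : F.b ≠ F'.t := hv1 F'.t (by tauto)
  have htb' : F.t ≠ F'.b := hv2 F'.b (by tauto)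
  have htt' : F.t ≠ F'.t := hv2 F'.t (by tauto)
  constructor
  · intro h
    obtain ⟨p, hp, hp'⟩ := Set.nonempty_iff_ne_empty.mpr h
    have hcl : IsClosed F.toSet := (isClosed_Icc).prod isClosed_Icc
    have hcl' : IsClosed F'.toSet := (isClosed_Icc).prod isClosed_Icc
    have hpF : p ∈ F.toSet := hcl.frontier_subset hp
    have hpF' : p ∈ F'.toSet := hcl'.frontier_subset hp'
    refine ⟨⟨p, hpF, hpF'⟩, ?_, ?_⟩
    · intro hsub
      obtain ⟨s1, s2, s3, s4⟩ := Rect.subset_iff.mp hsub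
      have : p ∈ interior F'.toSet := by
        rw [Rect.toSet, interior_prod_eq, interior_Icc, interior_Icc]
        obtain ⟨⟨q1, q2⟩, q3, q4⟩ := hpF
        exact ⟨⟨lt_of_lt_of_le (lt_of_le_of_ne s1 (Ne.symm hll')) q1,
               lt_of_le_of_lt q2 (lt_of_le_of_ne s2 hrr')⟩,
              ⟨lt_of_lt_of_le (lt_of_le_of_ne s3 (Ne.symm hbb')) q3,
               lt_of_le_of_lt q4 (lt_of_le_of_ne s4 htt')⟩⟩
      exact disjoint_interior_frontier.le_bot ⟨this, hp'⟩
    · intro hsub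
      obtain ⟨s1, s2, s3, s4⟩ := Rect.subset_iff.mp hsub
      have : p ∈ interior F.toSet := by
        rw [Rect.toSet, interior_prod_eq, interior_Icc, interior_Icc]
        obtain ⟨⟨q1, q2⟩, q3, q4⟩ := hpF'
        exact ⟨⟨lt_of_lt_of_le (lt_of_le_of_ne s1 hll') q1,
               lt_of_le_of_lt q2 (lt_of_le_of_ne s2 (Ne.symm hrr'))⟩,
              ⟨lt_of_lt_of_le (lt_of_le_of_ne s3 hbb') q3,
               lt_of_le_of_lt q4 (lt_of_le_of_ne s4 (Ne.symm htt'))⟩⟩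
      exact disjoint_interior_frontier.le_bot ⟨this, hp⟩
  · rintro ⟨⟨q, ⟨⟨qa, qb⟩, qc, qd⟩, ⟨qe, qf⟩, qg, qh⟩, hns, hns'⟩
    -- strict overlap inequalities
    have o1 : F.l < F'.r := lt_of_le_of_ne (qa.trans qf) hlr'
    have o2 : F'.l < F.r := lt_of_le_of_ne (qe.trans qb) (fun h => hrl' h.symm)
    have o3 : F.b < F'.t := lt_of_le_of_ne (qc.trans qh) hbt'
    have o4 : F'.b < F.t := lt_of_le_of_ne (qg.trans qd) (fun h => htb' h.symm)
    have hc1 : ¬ (F'.l < F.l ∧ F.r < F'.r ∧ F'.b < F.b ∧ F.t < F'.t) := by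
      intro ⟨w1, w2, w3, w4⟩
      exact hns (Rect.subset_iff.mpr ⟨w1.le, w2.le, w3.le, w4.le⟩)
    have hc2 : ¬ (F.l < F'.l ∧ F'.r < F.r ∧ F.b < F'.b ∧ F'.t < F.t) := by
      intro ⟨w1, w2, w3, w4⟩
      exact hns' (Rect.subset_iff.mpr ⟨w1.le, w2.le, w3.le, w4.le⟩)
    refine Set.nonempty_iff_ne_empty.mp ?_
    rcases lt_or_gt_of_ne hll' with c1 | c1 <;>
    rcases lt_or_gt_of_ne hrr' with c2 | c2 <;>
    rcases lt_or_gt_of_ne hbb' with c3 | c3 <;>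
    rcases lt_or_gt_of_ne htt' with c4 | c4 <;>
    first
      | exact (hc1 ⟨c1, c2, c3, c4⟩).elim
      | exact (hc2 ⟨c1, c2, c3, c4⟩).elim
      | exact ⟨(F'.l, F.b), Set.mem_inter (F.mem_frame_bot (by linarith) (by linarith)) (F'.mem_frame_left (by linarith) (by linarith))⟩
      | exact ⟨(F'.l, F.t), Set.mem_inter (F.mem_frame_top (by linarith) (by linarith)) (F'.mem_frame_left (by linarith) (by linarith))⟩
      | exact ⟨(F'.r, F.b), Set.mem_inter (F.mem_frame_bot (by linarith) (by linarith)) (F'.mem_frame_right (by linarith) (by linarith))⟩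
      | exact ⟨(F'.r, F.t), Set.mem_inter (F.mem_frame_top (by linarith) (by linarith)) (F'.mem_frame_right (by linarith) (by linarith))⟩
      | exact ⟨(F.l, F'.b), Set.mem_inter (F.mem_frame_left (by linarith) (by linarith)) (F'.mem_frame_bot (by linarith) (by linarith))⟩
      | exact ⟨(F.l, F'.t), Set.mem_inter (F.mem_frame_left (by linarith) (by linarith)) (F'.mem_frame_top (by linarith) (by linarith))⟩
      | exact ⟨(F.r, F'.b), Set.mem_inter (F.mem_frame_right (by linarith) (by linarith)) (F'.mem_frame_bot (by linarith) (by linarith))⟩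
      | exact ⟨(F.r, F'.t), Set.mem_inter (F.mem_frame_right (by linarith) (by linarith)) (F'.mem_frame_top (by linarith) (by linarith))⟩
end

section
/- For every integer k ≥ 1 there exists a finite family R of closed axis-aligned rectangles in ℝ² such that the overlap graph of R is triangle-free, R has at most 2^(2^(2k)) members, and the chromatic number of the overlap graph of R is at least k. -/
open Set

/-! ### Coordinate-level predicates -/

namespace Burl

lemma Rect.ext' {R S : Rect} (h1 : R.l = S.l) (h2 : R.r = S.r) (h3 : R.b = S.b)
    (h4 : R.t = S.t) : R = S := by
  cases R; cases S; simp_all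

/-- `R ⊆ S` coordinatewise. -/
def Sub (R S : Rect) : Prop := S.l ≤ R.l ∧ R.r ≤ S.r ∧ S.b ≤ R.b ∧ R.t ≤ S.t

/-- strict disjointness -/
def SDisj (R S : Rect) : Prop := R.r < S.l ∨ S.r < R.l ∨ R.t < S.b ∨ S.t < R.b

/-- adjacency in the overlap graph, coordinatewise -/
def CAdj (R S : Rect) : Prop :=
  (R.l ≤ S.r ∧ S.l ≤ R.r ∧ R.b ≤ S.t ∧ S.b ≤ R.t) ∧ ¬ Sub R S ∧ ¬ Sub S R

/-- non-adjacency certificate -/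
def NAdj (R S : Rect) : Prop := SDisj R S ∨ Sub R S ∨ Sub S R

lemma sub_toSet {R S : Rect} : R.toSet ⊆ S.toSet ↔ Sub R S := by
  unfold Rect.toSet Sub
  rw [Set.prod_subset_prod_iff]
  constructor
  · rintro (⟨h1, h2⟩ | h | h)
    · rw [Set.Icc_subset_Icc_iff R.hlr.le] at h1
      rw [Set.Icc_subset_Icc_iff R.hbt.le] at h2
      exact ⟨h1.1, h1.2, h2.1, h2.2⟩
    · exact absurd h (by simp [Set.nonempty_Icc.2 R.hlr.le, ← Set.nonempty_iff_ne_empty])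
    · exact absurd h (by simp [Set.nonempty_Icc.2 R.hbt.le, ← Set.nonempty_iff_ne_empty])
  · rintro ⟨h1, h2, h3, h4⟩
    exact Or.inl ⟨Set.Icc_subset_Icc h1 h2, Set.Icc_subset_Icc h3 h4⟩

lemma inter_toSet {R S : Rect} :
    (R.toSet ∩ S.toSet).Nonempty ↔ (R.l ≤ S.r ∧ S.l ≤ R.r ∧ R.b ≤ S.t ∧ S.b ≤ R.t) := by
  unfold Rect.toSet
  rw [Set.prod_inter_prod, Set.prod_nonempty_iff, Set.Icc_inter_Icc, Set.Icc_inter_Icc]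
  simp only [Set.nonempty_Icc, sup_le_iff, le_inf_iff]
  exact ⟨fun h => ⟨h.1.2.1, h.1.1.2, h.2.2.1, h.2.1.2⟩,
    fun h => ⟨⟨⟨R.hlr.le, h.2.1⟩, h.1, S.hlr.le⟩, ⟨R.hbt.le, h.2.2.2⟩, h.2.2.1, S.hbt.le⟩⟩

lemma adj_iff {𝔉 : Finset Rect} {R S : {R : Rect // R ∈ 𝔉}} :
    (overlapGraph 𝔉).Adj R S ↔ CAdj R.1 S.1 := by
  show ((R.1.toSet ∩ S.1.toSet).Nonempty ∧ ¬ R.1.toSet ⊆ S.1.toSet ∧ ¬ S.1.toSet ⊆ R.1.toSet) ↔ _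
  rw [inter_toSet, sub_toSet, sub_toSet]
  rfl

lemma NAdj.not_cadj {R S : Rect} (h : NAdj R S) : ¬ CAdj R S := by
  rintro ⟨⟨i1, i2, i3, i4⟩, ns1, ns2⟩
  rcases h with (h | h | h | h) | h | h
  · exact absurd i2 (by linarith)
  · exact absurd i1 (by linarith)
  · exact absurd i4 (by linarith)
  · exact absurd i3 (by linarith)
  · exact ns1 h
  · exact ns2 h

lemma CAdj.symm {R S : Rect} (h : CAdj R S) : CAdj S R :=
  ⟨⟨h.1.2.1, h.1.1, h.1.2.2.2, h.1.2.2.1⟩, h.2.2, h.2.1⟩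

lemma CAdj.irrefl {R : Rect} : ¬ CAdj R R := fun h => h.2.1 ⟨le_rfl, le_rfl, le_rfl, le_rfl⟩

lemma NAdj.symm {R S : Rect} (h : NAdj R S) : NAdj S R := by
  unfold NAdj SDisj at *; tauto

end Burl

namespace Burl

/-! ### Affine maps -/

noncomputable def amap (p q u v : ℝ) (R : Rect) : Rect :=
  if h : 0 < p ∧ 0 < u then
    ⟨p*R.l+q, p*R.r+q, u*R.b+v, u*R.t+v,
      by nlinarith [R.hlr], by nlinarith [R.hbt]⟩
  else R

variable {p q u v : ℝ}

lemma amap_l (hp : 0 < p) (hu : 0 < u) (R : Rect) : (amap p q u v R).l = p*R.l+q := by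
  rw [amap, dif_pos ⟨hp, hu⟩]
lemma amap_r (hp : 0 < p) (hu : 0 < u) (R : Rect) : (amap p q u v R).r = p*R.r+q := by
  rw [amap, dif_pos ⟨hp, hu⟩]
lemma amap_b (hp : 0 < p) (hu : 0 < u) (R : Rect) : (amap p q u v R).b = u*R.b+v := by
  rw [amap, dif_pos ⟨hp, hu⟩]
lemma amap_t (hp : 0 < p) (hu : 0 < u) (R : Rect) : (amap p q u v R).t = u*R.t+v := by
  rw [amap, dif_pos ⟨hp, hu⟩]

lemma aff_le {p q x y : ℝ} (hp : 0 < p) : p*x+q ≤ p*y+q ↔ x ≤ y := by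
  constructor <;> intro h <;> nlinarith

lemma aff_lt {p q x y : ℝ} (hp : 0 < p) : p*x+q < p*y+q ↔ x < y := by
  constructor <;> intro h <;> nlinarith

lemma amap_sub (hp : 0 < p) (hu : 0 < u) {R S : Rect} :
    Sub (amap p q u v R) (amap p q u v S) ↔ Sub R S := by
  unfold Sub
  rw [amap_l hp hu, amap_l hp hu, amap_r hp hu, amap_r hp hu, amap_b hp hu, amap_b hp hu,
    amap_t hp hu, amap_t hp hu, aff_le hp, aff_le hp, aff_le hu, aff_le hu]

lemma amap_cadj (hp : 0 < p) (hu : 0 < u) {R S : Rect} :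
    CAdj (amap p q u v R) (amap p q u v S) ↔ CAdj R S := by
  unfold CAdj
  rw [amap_sub hp hu, amap_sub hp hu, amap_l hp hu, amap_l hp hu, amap_r hp hu, amap_r hp hu,
    amap_b hp hu, amap_b hp hu, amap_t hp hu, amap_t hp hu,
    aff_le hp, aff_le hp, aff_le hu, aff_le hu]

lemma amap_nadj (hp : 0 < p) (hu : 0 < u) {R S : Rect} :
    NAdj (amap p q u v R) (amap p q u v S) ↔ NAdj R S := by
  unfold NAdj SDisj
  rw [amap_sub hp hu, amap_sub hp hu, amap_l hp hu, amap_l hp hu, amap_r hp hu, amap_r hp hu,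
    amap_b hp hu, amap_b hp hu, amap_t hp hu, amap_t hp hu,
    aff_lt hp, aff_lt hp, aff_lt hu, aff_lt hu]

lemma amap_inj (hp : 0 < p) (hu : 0 < u) : Function.Injective (amap p q u v) := by
  intro R S h
  have h1 := congrArg Rect.l h
  have h2 := congrArg Rect.r h
  have h3 := congrArg Rect.b h
  have h4 := congrArg Rect.t h
  rw [amap_l hp hu, amap_l hp hu] at h1
  rw [amap_r hp hu, amap_r hp hu] at h2
  rw [amap_b hp hu, amap_b hp hu] at h3
  rw [amap_t hp hu, amap_t hp hu] at h4
  have hpne : p ≠ 0 := ne_of_gt hp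
  have hune : u ≠ 0 := ne_of_gt hu
  exact Rect.ext' (mul_left_cancel₀ hpne (by linarith)) (mul_left_cancel₀ hpne (by linarith))
    (mul_left_cancel₀ hune (by linarith)) (mul_left_cancel₀ hune (by linarith))

end Burl

namespace Burl

/-! ### Probes, families, the invariant -/

structure Probe where
  a : ℝ
  b : ℝ
  c : ℝ
  d : ℝ
  cr : Finset Rect

noncomputable instance : DecidableEq Probe := Classical.decEq _

structure Fam where
  rects : Finset Rect
  probes : Finset Probe

structure Good (k : ℕ) (F : Fam) : Prop where
  g0 : ∀ R ∈ F.rects, 0 < R.l ∧ R.r < 1 ∧ 0 < R.b ∧ R.t < 1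
  g1 : ∀ P ∈ F.probes, 0 < P.a ∧ P.a < P.b ∧ P.b < 1 ∧ 0 < P.c ∧ P.c < P.d ∧ P.d < 1
  g2 : ∀ P ∈ F.probes, P.cr ⊆ F.rects ∧ P.cr.Nonempty
  g3 : ∀ P ∈ F.probes, ∀ R ∈ P.cr, R.l < P.a ∧ P.b < R.r ∧ P.d < R.t ∧ (R.b < P.c ∨ P.d < R.b)
  g4 : ∀ P ∈ F.probes, ∀ R ∈ F.rects, R ∉ P.cr → R.r ≤ P.a ∨ P.b ≤ R.l ∨ R.t ≤ P.c
  g6 : ∀ P ∈ F.probes, ∀ P' ∈ F.probes, P ≠ P' → P.b ≤ P'.a ∨ P'.b ≤ P.a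
  g7 : ∀ P ∈ F.probes, ∀ R ∈ P.cr, ∀ S ∈ P.cr, R ≠ S → NAdj R S
  g8 : ∀ R ∈ F.rects, ∀ S ∈ F.rects, ∀ T ∈ F.rects, CAdj R S → CAdj R T → CAdj S T → False
  g9 : ∀ φ : Rect → ℕ, (∀ R ∈ F.rects, ∀ S ∈ F.rects, CAdj R S → φ R ≠ φ S) →
        ∃ P ∈ F.probes, k ≤ (P.cr.image φ).card
  g10 : F.rects.card ≤ 2^(4^k) ∧ F.probes.card ≤ 2^(4^k)

/-! ### Construction -/

/-- x-coordinate rescaling into the middle third of the gap of `P`. -/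
noncomputable def tx (P : Probe) (x : ℝ) : ℝ := (P.b-P.a)/3 * x + (P.a + (P.b-P.a)/3)
/-- y-coordinate rescaling into the middle third of the gap of `P`. -/
noncomputable def ty (P : Probe) (y : ℝ) : ℝ := (P.d-P.c)/3 * y + (P.c + (P.d-P.c)/3)

noncomputable def tmapR (P : Probe) : Rect → Rect :=
  amap ((P.b-P.a)/3) (P.a + (P.b-P.a)/3) ((P.d-P.c)/3) (P.c + (P.d-P.c)/3)

noncomputable def tmapP (P Q : Probe) : Probe :=
  ⟨tx P Q.a, tx P Q.b, ty P Q.c, ty P Q.d, Q.cr.image (tmapR P)⟩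

/-- top of the inner box of `P` -/
noncomputable def ptop (P : Probe) : ℝ := ty P 1

/-- max of the tops of the crossing rectangles -/
noncomputable def Mtop (Q : Probe) : ℝ :=
  if h : (Q.cr.image Rect.t).Nonempty then (Q.cr.image Rect.t).max' h else 0

/-- the diagonal rectangle; `τ` is the ceiling it must stay under -/
noncomputable def Dr (τ : ℝ) (Q : Probe) : Rect :=
  if h : Q.a < Q.b ∧ Q.c < Q.d ∧ Q.d < Mtop Q ∧ Mtop Q < τ then
    ⟨Q.a + (Q.b-Q.a)*(2/5), Q.a + (Q.b-Q.a)*(3/5), Q.c + (Q.d-Q.c)/3, (Mtop Q + τ)/2,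
      by nlinarith [h.1], by nlinarith [h.2.1, h.2.2.1, h.2.2.2]⟩
  else ⟨0, 1, 0, 1, one_pos, one_pos⟩

/-- first new probe: catches `P.cr ∪ Q.cr` (here `Q` is already transported). -/
noncomputable def xiP (P Q : Probe) : Probe :=
  ⟨Q.a + (Q.b-Q.a)/5, Q.a + (Q.b-Q.a)*(3/10), Q.c + (Q.d-Q.c)/9, Q.c + (Q.d-Q.c)*(2/9),
    P.cr ∪ Q.cr⟩

/-- second new probe: catches `P.cr ∪ {D}`. -/
noncomputable def muP (τ : ℝ) (P Q : Probe) : Probe :=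
  ⟨(Dr τ Q).l + ((Dr τ Q).r - (Dr τ Q).l)/3, (Dr τ Q).l + ((Dr τ Q).r - (Dr τ Q).l)*(2/3),
    Mtop Q + (τ - Mtop Q)/8, Mtop Q + (τ - Mtop Q)/4, P.cr ∪ {Dr τ Q}⟩

noncomputable def step (F : Fam) : Fam where
  rects := F.rects ∪ F.probes.biUnion (fun P =>
    F.rects.image (tmapR P) ∪ F.probes.image (fun Q => Dr (ptop P) (tmapP P Q)))
  probes := F.probes.biUnion (fun P => F.probes.biUnion (fun Q =>
    {xiP P (tmapP P Q), muP (ptop P) P (tmapP P Q)}))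

noncomputable def base : Fam where
  rects := {⟨1/4, 3/4, 1/2, 5/8, by norm_num, by norm_num⟩}
  probes := {⟨3/8, 1/2, 1/8, 1/4, {⟨1/4, 3/4, 1/2, 5/8, by norm_num, by norm_num⟩}⟩}

noncomputable def burl : ℕ → Fam
  | 0 => base
  | n+1 => step (burl n)

end Burl

namespace Burl

/-! ### Basic facts about the rescaling maps -/

variable {P : Probe}

lemma hp3 (hab : P.a < P.b) : 0 < (P.b-P.a)/3 := by linarith
lemma hu3 (hcd : P.c < P.d) : 0 < (P.d-P.c)/3 := by linarith

lemma tx_le (hab : P.a < P.b) {x y : ℝ} (h : x ≤ y) : tx P x ≤ tx P y := by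
  unfold tx
  have h3 : (0:ℝ) ≤ (P.b-P.a)/3 := by linarith
  nlinarith [mul_le_mul_of_nonneg_left h h3]

lemma tx_lt (hab : P.a < P.b) {x y : ℝ} (h : x < y) : tx P x < tx P y := by
  unfold tx
  have h3 : (0:ℝ) < (P.b-P.a)/3 := by linarith
  nlinarith [mul_lt_mul_of_pos_left h h3]

lemma ty_le (hcd : P.c < P.d) {x y : ℝ} (h : x ≤ y) : ty P x ≤ ty P y := by
  unfold ty
  have h3 : (0:ℝ) ≤ (P.d-P.c)/3 := by linarith
  nlinarith [mul_le_mul_of_nonneg_left h h3]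

lemma ty_lt (hcd : P.c < P.d) {x y : ℝ} (h : x < y) : ty P x < ty P y := by
  unfold ty
  have h3 : (0:ℝ) < (P.d-P.c)/3 := by linarith
  nlinarith [mul_lt_mul_of_pos_left h h3]

lemma tx0_gt (hab : P.a < P.b) : P.a < tx P 0 := by unfold tx; nlinarith
lemma tx1_lt (hab : P.a < P.b) : tx P 1 < P.b := by unfold tx; nlinarith
lemma ty0_gt (hcd : P.c < P.d) : P.c < ty P 0 := by unfold ty; nlinarith
lemma ty1_lt (hcd : P.c < P.d) : ty P 1 < P.d := by unfold ty; nlinarith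

lemma tmapR_l (hab : P.a < P.b) (hcd : P.c < P.d) (R : Rect) :
    (tmapR P R).l = tx P R.l := amap_l (hp3 hab) (hu3 hcd) R
lemma tmapR_r (hab : P.a < P.b) (hcd : P.c < P.d) (R : Rect) :
    (tmapR P R).r = tx P R.r := amap_r (hp3 hab) (hu3 hcd) R
lemma tmapR_b (hab : P.a < P.b) (hcd : P.c < P.d) (R : Rect) :
    (tmapR P R).b = ty P R.b := amap_b (hp3 hab) (hu3 hcd) R
lemma tmapR_t (hab : P.a < P.b) (hcd : P.c < P.d) (R : Rect) :
    (tmapR P R).t = ty P R.t := amap_t (hp3 hab) (hu3 hcd) R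

lemma tmapR_cadj (hab : P.a < P.b) (hcd : P.c < P.d) {R S : Rect} :
    CAdj (tmapR P R) (tmapR P S) ↔ CAdj R S := amap_cadj (hp3 hab) (hu3 hcd)

lemma tmapR_nadj (hab : P.a < P.b) (hcd : P.c < P.d) {R S : Rect} :
    NAdj (tmapR P R) (tmapR P S) ↔ NAdj R S := amap_nadj (hp3 hab) (hu3 hcd)

lemma tmapR_inj (hab : P.a < P.b) (hcd : P.c < P.d) :
    Function.Injective (tmapR P) := amap_inj (hp3 hab) (hu3 hcd)

/-- strictly inside the middle part of the gap box of `P` -/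
def InMid (Z : Rect) (P : Probe) : Prop :=
  tx P 0 < Z.l ∧ Z.r < tx P 1 ∧ ty P 0 < Z.b ∧ Z.t < ty P 1

end Burl

namespace Burl

open Finset

/-! ### Contextual facts for the step construction -/

section ctx
variable {k : ℕ} {F : Fam} {P Q : Probe}

lemma inner_inmid (hF : Good k F) (hP : P ∈ F.probes) {R : Rect} (hR : R ∈ F.rects) :
    InMid (tmapR P R) P := by
  obtain ⟨-, hab, -, -, hcd, -⟩ := hF.g1 P hP
  obtain ⟨h0, h1, h2, h3⟩ := hF.g0 R hR
  refine ⟨?_, ?_, ?_, ?_⟩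
  · rw [tmapR_l hab hcd]; exact tx_lt hab h0
  · rw [tmapR_r hab hcd]; exact tx_lt hab h1
  · rw [tmapR_b hab hcd]; exact ty_lt hcd h2
  · rw [tmapR_t hab hcd]; exact ty_lt hcd h3

/-- anything strictly inside the middle of the gap of `P` is non-adjacent to all old rects -/
lemma core1 (hF : Good k F) (hP : P ∈ F.probes) {Z : Rect} (hZ : InMid Z P)
    {R : Rect} (hR : R ∈ F.rects) : NAdj Z R := by
  obtain ⟨-, hab, -, -, hcd, -⟩ := hF.g1 P hP
  have h1 := tx0_gt hab
  have h2 := tx1_lt hab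
  have h3 := ty0_gt hcd
  have h4 := ty1_lt hcd
  obtain ⟨z1, z2, z3, z4⟩ := hZ
  by_cases hcr : R ∈ P.cr
  · obtain ⟨e1, e2, e3, e4⟩ := hF.g3 P hP R hcr
    rcases e4 with e4 | e4
    · -- sheath : Z ⊆ R
      exact Or.inr (Or.inl ⟨by linarith, by linarith, by linarith, by linarith⟩)
    · -- band above the gap
      exact Or.inl (Or.inr (Or.inr (Or.inl (by linarith))))
  · rcases hF.g4 P hP R hR hcr with e | e | e
    · exact Or.inl (Or.inr (Or.inl (by linarith)))
    · exact Or.inl (Or.inl (by linarith))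
    · exact Or.inl (Or.inr (Or.inr (Or.inr (by linarith))))

/-- middles of distinct probes are disjoint -/
lemma core2 (hF : Good k F) (hP : P ∈ F.probes) {P' : Probe} (hP' : P' ∈ F.probes)
    (hne : P ≠ P') {Z Z' : Rect} (hZ : InMid Z P) (hZ' : InMid Z' P') : SDisj Z Z' := by
  obtain ⟨-, hab, -, -, hcd, -⟩ := hF.g1 P hP
  obtain ⟨-, hab', -, -, hcd', -⟩ := hF.g1 P' hP'
  have h2 := tx1_lt hab
  have h2' := tx1_lt hab'
  have h1 := tx0_gt hab
  have h1' := tx0_gt hab'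
  rcases hF.g6 P hP P' hP' hne with e | e
  · exact Or.inl (by linarith [hZ.2.1, hZ'.1])
  · exact Or.inr (Or.inl (by linarith [hZ.1, hZ'.2.1]))

variable (hF : Good k F) (hP : P ∈ F.probes) (hQ : Q ∈ F.probes)

lemma tq_coords (hF : Good k F) (hP : P ∈ F.probes) (hQ : Q ∈ F.probes) :
    tx P 0 < (tmapP P Q).a ∧ (tmapP P Q).a < (tmapP P Q).b ∧ (tmapP P Q).b < tx P 1 ∧
    ty P 0 < (tmapP P Q).c ∧ (tmapP P Q).c < (tmapP P Q).d ∧ (tmapP P Q).d < ty P 1 := by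
  obtain ⟨-, hab, -, -, hcd, -⟩ := hF.g1 P hP
  obtain ⟨q0, q1, q2, q3, q4, q5⟩ := hF.g1 Q hQ
  exact ⟨tx_lt hab q0, tx_lt hab q1, tx_lt hab q2, ty_lt hcd q3, ty_lt hcd q4, ty_lt hcd q5⟩

lemma tq_cr_sub (hF : Good k F) (hQ : Q ∈ F.probes) :
    (tmapP P Q).cr ⊆ F.rects.image (tmapR P) :=
  image_subset_image (hF.g2 Q hQ).1

lemma tq_cr_nonempty (hF : Good k F) (hQ : Q ∈ F.probes) : (tmapP P Q).cr.Nonempty :=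
  (hF.g2 Q hQ).2.image _

lemma tq_g3 (hF : Good k F) (hP : P ∈ F.probes) (hQ : Q ∈ F.probes) :
    ∀ R' ∈ (tmapP P Q).cr, R'.l < (tmapP P Q).a ∧ (tmapP P Q).b < R'.r ∧
      (tmapP P Q).d < R'.t ∧ (R'.b < (tmapP P Q).c ∨ (tmapP P Q).d < R'.b) := by
  obtain ⟨-, hab, -, -, hcd, -⟩ := hF.g1 P hP
  intro R' hR'
  obtain ⟨R, hR, rfl⟩ := mem_image.1 hR'
  obtain ⟨e1, e2, e3, e4⟩ := hF.g3 Q hQ R hR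
  rw [tmapR_l hab hcd, tmapR_r hab hcd, tmapR_b hab hcd, tmapR_t hab hcd]
  refine ⟨tx_lt hab e1, tx_lt hab e2, ty_lt hcd e3, ?_⟩
  rcases e4 with e4 | e4
  · exact Or.inl (ty_lt hcd e4)
  · exact Or.inr (ty_lt hcd e4)

lemma tq_g4 (hF : Good k F) (hP : P ∈ F.probes) (hQ : Q ∈ F.probes) :
    ∀ R' ∈ F.rects.image (tmapR P), R' ∉ (tmapP P Q).cr →
      R'.r ≤ (tmapP P Q).a ∨ (tmapP P Q).b ≤ R'.l ∨ R'.t ≤ (tmapP P Q).c := by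
  obtain ⟨-, hab, -, -, hcd, -⟩ := hF.g1 P hP
  intro R' hR' hncr
  obtain ⟨R, hR, rfl⟩ := mem_image.1 hR'
  have hR0 : R ∉ Q.cr := fun h => hncr (mem_image_of_mem _ h)
  rw [tmapR_l hab hcd, tmapR_r hab hcd, tmapR_t hab hcd]
  rcases hF.g4 Q hQ R hR hR0 with e | e | e
  · exact Or.inl (tx_le hab e)
  · exact Or.inr (Or.inl (tx_le hab e))
  · exact Or.inr (Or.inr (ty_le hcd e))

lemma tq_g7 (hF : Good k F) (hP : P ∈ F.probes) (hQ : Q ∈ F.probes) :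
    ∀ R' ∈ (tmapP P Q).cr, ∀ S' ∈ (tmapP P Q).cr, R' ≠ S' → NAdj R' S' := by
  obtain ⟨-, hab, -, -, hcd, -⟩ := hF.g1 P hP
  intro R' hR' S' hS' hne
  obtain ⟨R, hR, rfl⟩ := mem_image.1 hR'
  obtain ⟨S, hS, rfl⟩ := mem_image.1 hS'
  have : R ≠ S := fun h => hne (by rw [h])
  exact (tmapR_nadj hab hcd).2 (hF.g7 Q hQ R hR S hS this)

lemma Mtop_ge {W : Probe} {R : Rect} (hR : R ∈ W.cr) : R.t ≤ Mtop W := by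
  have hne : (W.cr.image Rect.t).Nonempty := ⟨R.t, mem_image_of_mem _ hR⟩
  rw [Mtop, dif_pos hne]
  exact le_max' _ _ (mem_image_of_mem _ hR)

lemma Mtop_mem {W : Probe} (h : W.cr.Nonempty) : ∃ R ∈ W.cr, Mtop W = R.t := by
  have hne : (W.cr.image Rect.t).Nonempty := h.image _
  rw [Mtop, dif_pos hne]
  obtain ⟨R, hR, hRt⟩ := mem_image.1 (max'_mem _ hne)
  exact ⟨R, hR, hRt.symm⟩

lemma hM2 (hF : Good k F) (hP : P ∈ F.probes) (hQ : Q ∈ F.probes) :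
    (tmapP P Q).d < Mtop (tmapP P Q) := by
  obtain ⟨R', hR'⟩ := tq_cr_nonempty (P := P) hF hQ
  exact lt_of_lt_of_le (tq_g3 hF hP hQ R' hR').2.2.1 (Mtop_ge hR')

lemma hM3 (hF : Good k F) (hP : P ∈ F.probes) (hQ : Q ∈ F.probes) :
    Mtop (tmapP P Q) < ptop P := by
  obtain ⟨R', hR', hM⟩ := Mtop_mem (tq_cr_nonempty hF hQ)
  rw [hM]
  obtain ⟨R, hR, hRe⟩ := mem_image.1 (tq_cr_sub hF hQ hR')
  have := (inner_inmid hF hP hR).2.2.2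
  rw [hRe] at this
  exact this

lemma Dguard (hF : Good k F) (hP : P ∈ F.probes) (hQ : Q ∈ F.probes) :
    (tmapP P Q).a < (tmapP P Q).b ∧ (tmapP P Q).c < (tmapP P Q).d ∧
    (tmapP P Q).d < Mtop (tmapP P Q) ∧ Mtop (tmapP P Q) < ptop P := by
  obtain ⟨-, e1, -, -, e2, -⟩ := tq_coords hF hP hQ
  exact ⟨e1, e2, hM2 hF hP hQ, hM3 hF hP hQ⟩

lemma Dr_l {τ : ℝ} {W : Probe} (h : W.a < W.b ∧ W.c < W.d ∧ W.d < Mtop W ∧ Mtop W < τ) :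
    (Dr τ W).l = W.a + (W.b-W.a)*(2/5) := by rw [Dr, dif_pos h]
lemma Dr_r {τ : ℝ} {W : Probe} (h : W.a < W.b ∧ W.c < W.d ∧ W.d < Mtop W ∧ Mtop W < τ) :
    (Dr τ W).r = W.a + (W.b-W.a)*(3/5) := by rw [Dr, dif_pos h]
lemma Dr_b {τ : ℝ} {W : Probe} (h : W.a < W.b ∧ W.c < W.d ∧ W.d < Mtop W ∧ Mtop W < τ) :
    (Dr τ W).b = W.c + (W.d-W.c)/3 := by rw [Dr, dif_pos h]
lemma Dr_t {τ : ℝ} {W : Probe} (h : W.a < W.b ∧ W.c < W.d ∧ W.d < Mtop W ∧ Mtop W < τ) :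
    (Dr τ W).t = (Mtop W + τ)/2 := by rw [Dr, dif_pos h]

/-- coordinates of the diagonal, relative to the (transported) inner probe -/
lemma D_coords {τ : ℝ} {W : Probe}
    (h : W.a < W.b ∧ W.c < W.d ∧ W.d < Mtop W ∧ Mtop W < τ) :
    W.a < (Dr τ W).l ∧ (Dr τ W).l < (Dr τ W).r ∧ (Dr τ W).r < W.b ∧
    W.c < (Dr τ W).b ∧ (Dr τ W).b < W.d ∧ Mtop W < (Dr τ W).t ∧ (Dr τ W).t < τ := by
  rw [Dr_l h, Dr_r h, Dr_b h, Dr_t h]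
  obtain ⟨e1, e2, e3, e4⟩ := h
  refine ⟨by nlinarith, by nlinarith, by nlinarith, by nlinarith, by nlinarith,
    by nlinarith, by nlinarith⟩

lemma D_inmid (hF : Good k F) (hP : P ∈ F.probes) (hQ : Q ∈ F.probes) :
    InMid (Dr (ptop P) (tmapP P Q)) P := by
  have h := Dguard hF hP hQ
  obtain ⟨d1, d2, d3, d4, d5, d6, d7⟩ := D_coords h
  obtain ⟨q1, q2, q3, q4, q5, q6⟩ := tq_coords hF hP hQ
  have hpt : ptop P = ty P 1 := rfl
  exact ⟨by linarith, by linarith, by linarith, by linarith⟩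

/-- the diagonal is adjacent to every rect crossing the inner probe -/
lemma D_cadj_cr (hF : Good k F) (hP : P ∈ F.probes) (hQ : Q ∈ F.probes) :
    ∀ S ∈ (tmapP P Q).cr, CAdj (Dr (ptop P) (tmapP P Q)) S := by
  intro S hS
  have h := Dguard hF hP hQ
  obtain ⟨d1, d2, d3, d4, d5, d6, d7⟩ := D_coords h
  obtain ⟨e1, e2, e3, e4⟩ := tq_g3 hF hP hQ S hS
  have hMS : S.t ≤ Mtop (tmapP P Q) := Mtop_ge hS
  have hSbt := S.hbt
  constructor
  · refine ⟨by linarith, by linarith, ?_, by linarith⟩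
    -- D.b ≤ S.t
    rcases e4 with e4 | e4 <;> linarith
  constructor
  · -- ¬ Sub D S : D.t > S.t
    rintro ⟨-, -, -, hc⟩
    linarith
  · -- ¬ Sub S D : S.l < D.l
    rintro ⟨hc, -, -, -⟩
    linarith

/-- the diagonal avoids inner rects that do not cross the inner probe -/
lemma D_nadj_notcr (hF : Good k F) (hP : P ∈ F.probes) (hQ : Q ∈ F.probes) :
    ∀ S ∈ F.rects.image (tmapR P), S ∉ (tmapP P Q).cr →
      SDisj (Dr (ptop P) (tmapP P Q)) S := by
  intro S hS hncr
  have h := Dguard hF hP hQ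
  obtain ⟨d1, d2, d3, d4, d5, d6, d7⟩ := D_coords h
  rcases tq_g4 hF hP hQ S hS hncr with e | e | e
  · exact Or.inr (Or.inl (by linarith))
  · exact Or.inl (by linarith)
  · exact Or.inr (Or.inr (Or.inr (by linarith)))

lemma xi_fact {W : Probe} (h1 : W.a < W.b) (h2 : W.c < W.d) :
    W.a < (xiP P W).a ∧ (xiP P W).a < (xiP P W).b ∧ (xiP P W).b < W.a + (W.b-W.a)*(2/5) ∧
    W.c < (xiP P W).c ∧ (xiP P W).c < (xiP P W).d ∧ (xiP P W).d < W.c + (W.d-W.c)/3 := by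
  have e1 : (xiP P W).a = W.a + (W.b-W.a)/5 := rfl
  have e2 : (xiP P W).b = W.a + (W.b-W.a)*(3/10) := rfl
  have e3 : (xiP P W).c = W.c + (W.d-W.c)/9 := rfl
  have e4 : (xiP P W).d = W.c + (W.d-W.c)*(2/9) := rfl
  rw [e1, e2, e3, e4]
  refine ⟨by linarith, by linarith, by linarith, by linarith, by linarith, by linarith⟩

lemma mu_fact {τ : ℝ} {W : Probe}
    (h : W.a < W.b ∧ W.c < W.d ∧ W.d < Mtop W ∧ Mtop W < τ) :
    (Dr τ W).l < (muP τ P W).a ∧ (muP τ P W).a < (muP τ P W).b ∧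
    (muP τ P W).b < (Dr τ W).r ∧
    Mtop W < (muP τ P W).c ∧ (muP τ P W).c < (muP τ P W).d ∧ (muP τ P W).d < (Dr τ W).t := by
  have hd := D_coords h
  have e1 : (muP τ P W).a = (Dr τ W).l + ((Dr τ W).r - (Dr τ W).l)/3 := rfl
  have e2 : (muP τ P W).b = (Dr τ W).l + ((Dr τ W).r - (Dr τ W).l)*(2/3) := rfl
  have e3 : (muP τ P W).c = Mtop W + (τ - Mtop W)/8 := rfl
  have e4 : (muP τ P W).d = Mtop W + (τ - Mtop W)/4 := rfl
  rw [e1, e2, e3, e4, Dr_t h]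
  obtain ⟨-, d2, -⟩ := hd
  refine ⟨by linarith, by linarith, by linarith, by linarith, by linarith, by linarith⟩

/-! ### Membership in the step family -/

lemma mem_step_A {R : Rect} (hR : R ∈ F.rects) : R ∈ (step F).rects :=
  mem_union_left _ hR

lemma mem_step_I (hP : P ∈ F.probes) {R : Rect} (hR : R ∈ F.rects) :
    tmapR P R ∈ (step F).rects := by
  refine mem_union_right _ (mem_biUnion.2 ⟨P, hP, mem_union_left _ (mem_image_of_mem _ hR)⟩)

lemma mem_step_D (hP : P ∈ F.probes) (hQ : Q ∈ F.probes) :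
    Dr (ptop P) (tmapP P Q) ∈ (step F).rects :=
  mem_union_right _ (mem_biUnion.2 ⟨P, hP, mem_union_right _ (mem_image_of_mem _ hQ)⟩)

lemma step_cases {R : Rect} (hR : R ∈ (step F).rects) :
    R ∈ F.rects ∨ ∃ P ∈ F.probes,
      ((∃ R₀ ∈ F.rects, R = tmapR P R₀) ∨ ∃ Q ∈ F.probes, R = Dr (ptop P) (tmapP P Q)) := by
  rcases mem_union.1 hR with h | h
  · exact Or.inl h
  · obtain ⟨P, hP, h⟩ := mem_biUnion.1 h
    rcases mem_union.1 h with h | h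
    · obtain ⟨R₀, hR₀, rfl⟩ := mem_image.1 h
      exact Or.inr ⟨P, hP, Or.inl ⟨R₀, hR₀, rfl⟩⟩
    · obtain ⟨Q, hQ, rfl⟩ := mem_image.1 h
      exact Or.inr ⟨P, hP, Or.inr ⟨Q, hQ, rfl⟩⟩

lemma mem_step_xi (hP : P ∈ F.probes) (hQ : Q ∈ F.probes) :
    xiP P (tmapP P Q) ∈ (step F).probes := by
  refine mem_biUnion.2 ⟨P, hP, mem_biUnion.2 ⟨Q, hQ, ?_⟩⟩
  simp

lemma mem_step_mu (hP : P ∈ F.probes) (hQ : Q ∈ F.probes) :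
    muP (ptop P) P (tmapP P Q) ∈ (step F).probes := by
  refine mem_biUnion.2 ⟨P, hP, mem_biUnion.2 ⟨Q, hQ, ?_⟩⟩
  simp

lemma stepP_cases {π : Probe} (hπ : π ∈ (step F).probes) :
    ∃ P ∈ F.probes, ∃ Q ∈ F.probes,
      π = xiP P (tmapP P Q) ∨ π = muP (ptop P) P (tmapP P Q) := by
  obtain ⟨P, hP, h⟩ := mem_biUnion.1 hπ
  obtain ⟨Q, hQ, h⟩ := mem_biUnion.1 h
  rcases mem_insert.1 h with h | h
  · exact ⟨P, hP, Q, hQ, Or.inl h⟩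
  · exact ⟨P, hP, Q, hQ, Or.inr (mem_singleton.1 h)⟩

/-! ### Step preserves the invariants -/

lemma inmid_unit (hF : Good k F) (hP : P ∈ F.probes) {Z : Rect} (hZ : InMid Z P) :
    0 < Z.l ∧ Z.r < 1 ∧ 0 < Z.b ∧ Z.t < 1 := by
  obtain ⟨h0, hab, h1, h2, hcd, h3⟩ := hF.g1 P hP
  have e1 := tx0_gt hab
  have e2 := tx1_lt hab
  have e3 := ty0_gt hcd
  have e4 := ty1_lt hcd
  obtain ⟨z1, z2, z3, z4⟩ := hZ
  exact ⟨by linarith, by linarith, by linarith, by linarith⟩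

lemma inmid_not_A (hF : Good k F) (hP : P ∈ F.probes) {Z : Rect} (hZ : InMid Z P) :
    Z ∉ F.rects := by
  intro hZA
  obtain ⟨-, hab, -, -, hcd, -⟩ := hF.g1 P hP
  have e1 := tx0_gt hab
  have e2 := tx1_lt hab
  have e3 := ty0_gt hcd
  have e4 := ty1_lt hcd
  obtain ⟨z1, z2, z3, z4⟩ := hZ
  have hlr := Z.hlr
  have hbt := Z.hbt
  by_cases hcr : Z ∈ P.cr
  · have := (hF.g3 P hP Z hcr).1
    linarith
  · rcases hF.g4 P hP Z hZA hcr with e | e | e <;> linarith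

lemma step_g0 (hF : Good k F) :
    ∀ R ∈ (step F).rects, 0 < R.l ∧ R.r < 1 ∧ 0 < R.b ∧ R.t < 1 := by
  intro R hR
  rcases step_cases hR with h | ⟨P, hP, ⟨R₀, hR₀, rfl⟩ | ⟨Q, hQ, rfl⟩⟩
  · exact hF.g0 R h
  · exact inmid_unit hF hP (inner_inmid hF hP hR₀)
  · exact inmid_unit hF hP (D_inmid hF hP hQ)

lemma step_g1 (hF : Good k F) :
    ∀ π ∈ (step F).probes,
      0 < π.a ∧ π.a < π.b ∧ π.b < 1 ∧ 0 < π.c ∧ π.c < π.d ∧ π.d < 1 := by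
  intro π hπ
  obtain ⟨P, hP, Q, hQ, rfl | rfl⟩ := stepP_cases hπ
  all_goals {
    obtain ⟨h0, hab, h1, h2, hcd, h3⟩ := hF.g1 P hP
    have e1 := tx0_gt hab
    have e2 := tx1_lt hab
    have e3 := ty0_gt hcd
    have e4 := ty1_lt hcd
    obtain ⟨q1, q2, q3, q4, q5, q6⟩ := tq_coords hF hP hQ
    have hg := Dguard hF hP hQ
    obtain ⟨d1, d2, d3, d4, d5, d6, d7⟩ := D_coords hg
    have hpt : ptop P = ty P 1 := rfl
    have hMd := hM2 hF hP hQ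
    first
    | (obtain ⟨x1, x2, x3, x4, x5, x6⟩ := xi_fact (P := P) q2 q5
       exact ⟨by linarith, by linarith, by linarith, by linarith, by linarith, by linarith⟩)
    | (obtain ⟨x1, x2, x3, x4, x5, x6⟩ := mu_fact (P := P) hg
       exact ⟨by linarith, by linarith, by linarith, by linarith, by linarith, by linarith⟩) }

lemma image_sub_step (hP : P ∈ F.probes) :
    F.rects.image (tmapR P) ⊆ (step F).rects := fun R hR => by
  obtain ⟨R₀, hR₀, rfl⟩ := mem_image.1 hR
  exact mem_step_I hP hR₀

lemma step_g2 (hF : Good k F) :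
    ∀ π ∈ (step F).probes, π.cr ⊆ (step F).rects ∧ π.cr.Nonempty := by
  intro π hπ
  obtain ⟨P, hP, Q, hQ, rfl | rfl⟩ := stepP_cases hπ
  · constructor
    · exact union_subset (fun R hR => mem_step_A ((hF.g2 P hP).1 hR))
        (fun R hR => image_sub_step hP (tq_cr_sub hF hQ hR))
    · exact ((hF.g2 P hP).2.mono subset_union_left :)
  · constructor
    · exact union_subset (fun R hR => mem_step_A ((hF.g2 P hP).1 hR))
        (Finset.singleton_subset_iff.2 (mem_step_D hP hQ))
    · exact ((hF.g2 P hP).2.mono subset_union_left :)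

lemma step_g3 (hF : Good k F) :
    ∀ π ∈ (step F).probes, ∀ R ∈ π.cr,
      R.l < π.a ∧ π.b < R.r ∧ π.d < R.t ∧ (R.b < π.c ∨ π.d < R.b) := by
  intro π hπ R hR
  obtain ⟨P, hP, Q, hQ, rfl | rfl⟩ := stepP_cases hπ
  all_goals
    obtain ⟨h0, hab, h1, h2, hcd, h3⟩ := hF.g1 P hP
  all_goals
    have e1 := tx0_gt hab
  all_goals
    have e2 := tx1_lt hab
  all_goals
    have e3 := ty0_gt hcd
  all_goals
    have e4 := ty1_lt hcd
  all_goals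
    obtain ⟨q1, q2, q3, q4, q5, q6⟩ := tq_coords hF hP hQ
  all_goals
    have hg := Dguard hF hP hQ
  all_goals
    obtain ⟨d1, d2, d3, d4, d5, d6, d7⟩ := D_coords hg
  all_goals
    have hpt : ptop P = ty P 1 := rfl
  all_goals
    have hMd := hM2 hF hP hQ
  -- ξ case
  · obtain ⟨x1, x2, x3, x4, x5, x6⟩ := xi_fact (P := P) q2 q5
    have hDl : (Dr (ptop P) (tmapP P Q)).l =
        (tmapP P Q).a + ((tmapP P Q).b-(tmapP P Q).a)*(2/5) := Dr_l hg
    have hDb : (Dr (ptop P) (tmapP P Q)).b =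
        (tmapP P Q).c + ((tmapP P Q).d-(tmapP P Q).c)/3 := Dr_b hg
    rcases mem_union.1 hR with h | h
    · -- R ∈ P.cr
      obtain ⟨f1, f2, f3, f4⟩ := hF.g3 P hP R h
      refine ⟨by linarith, by linarith, by linarith, ?_⟩
      rcases f4 with f4 | f4
      · exact Or.inl (by linarith)
      · exact Or.inr (by linarith)
    · -- R ∈ W.cr
      obtain ⟨f1, f2, f3, f4⟩ := tq_g3 hF hP hQ R h
      refine ⟨by linarith, by linarith, by linarith, ?_⟩
      rcases f4 with f4 | f4
      · exact Or.inl (by linarith)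
      · exact Or.inr (by linarith)
  -- μ case
  · obtain ⟨x1, x2, x3, x4, x5, x6⟩ := mu_fact (P := P) hg
    rcases mem_union.1 hR with h | h
    · -- R ∈ P.cr
      obtain ⟨f1, f2, f3, f4⟩ := hF.g3 P hP R h
      refine ⟨by linarith, by linarith, by linarith, ?_⟩
      rcases f4 with f4 | f4
      · exact Or.inl (by linarith)
      · exact Or.inr (by linarith)
    · -- R = D
      rw [mem_singleton.1 h]
      refine ⟨by linarith, by linarith, by linarith, Or.inl (by linarith)⟩

lemma tq_disj (hF : Good k F) (hP : P ∈ F.probes) {Q₁ Q₂ : Probe} (hQ₁ : Q₁ ∈ F.probes)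
    (hQ₂ : Q₂ ∈ F.probes) (hne : Q₁ ≠ Q₂) :
    (tmapP P Q₁).b ≤ (tmapP P Q₂).a ∨ (tmapP P Q₂).b ≤ (tmapP P Q₁).a := by
  obtain ⟨-, hab, -, -, hcd, -⟩ := hF.g1 P hP
  rcases hF.g6 Q₁ hQ₁ Q₂ hQ₂ hne with e | e
  · exact Or.inl (tx_le hab e)
  · exact Or.inr (tx_le hab e)

lemma step_g4 (hF : Good k F) :
    ∀ π ∈ (step F).probes, ∀ R ∈ (step F).rects, R ∉ π.cr →
      R.r ≤ π.a ∨ π.b ≤ R.l ∨ R.t ≤ π.c := by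
  intro π hπ R hR hncr
  obtain ⟨P, hP, Q, hQ, hπe⟩ := stepP_cases hπ
  obtain ⟨h0, hab, h1, h2, hcd, h3⟩ := hF.g1 P hP
  have e1 := tx0_gt hab
  have e2 := tx1_lt hab
  have e3 := ty0_gt hcd
  have e4 := ty1_lt hcd
  obtain ⟨q1, q2, q3, q4, q5, q6⟩ := tq_coords hF hP hQ
  have hg := Dguard hF hP hQ
  obtain ⟨d1, d2, d3, d4, d5, d6, d7⟩ := D_coords hg
  have hpt : ptop P = ty P 1 := rfl
  have hMd := hM2 hF hP hQ
  -- the x-range of π sits strictly inside (W.a, W.b), and π.c is above the gap bottom of W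
  have hπx : (tmapP P Q).a < π.a ∧ π.b < (tmapP P Q).b ∧ (tmapP P Q).c < π.c := by
    rcases hπe with rfl | rfl
    · obtain ⟨x1, x2, x3, x4, x5, x6⟩ := xi_fact (P := P) q2 q5
      exact ⟨x1, by linarith, x4⟩
    · obtain ⟨x1, x2, x3, x4, x5, x6⟩ := mu_fact (P := P) hg
      exact ⟨by linarith, by linarith, by linarith⟩
  obtain ⟨hπ1, hπ2, hπ3⟩ := hπx
  rcases step_cases hR with hRA | ⟨P'', hP'', hinner⟩
  · -- R is an old rect; it is not in P.cr since P.cr ⊆ π.cr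
    have hRP : R ∉ P.cr := by
      intro hc
      apply hncr
      rcases hπe with rfl | rfl <;> exact mem_union_left _ hc
    rcases hF.g4 P hP R hRA hRP with e | e | e
    · exact Or.inl (by linarith)
    · exact Or.inr (Or.inl (by linarith))
    · refine Or.inr (Or.inr (by linarith))
  · by_cases hPP : P'' = P
    · subst hPP
      rcases hinner with ⟨R₀, hR₀, rfl⟩ | ⟨Q'', hQ'', rfl⟩
      · -- an inner rect of the same copy
        have hRim : tmapR P'' R₀ ∈ F.rects.image (tmapR P'') := mem_image_of_mem _ hR₀
        by_cases hWcr : tmapR P'' R₀ ∈ (tmapP P'' Q).cr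
        · -- crosses the inner probe: is in cr ξ, and is below μ.c
          rcases hπe with rfl | rfl
          · exact absurd (Finset.mem_union_right _ hWcr) hncr
          · have := Mtop_ge hWcr
            have hμc : Mtop (tmapP P'' Q) < (muP (ptop P'') P'' (tmapP P'' Q)).c :=
              (mu_fact (P := P'') hg).2.2.2.1
            exact Or.inr (Or.inr (by linarith))
        · rcases tq_g4 hF hP hQ _ hRim hWcr with e | e | e
          · exact Or.inl (by linarith)
          · exact Or.inr (Or.inl (by linarith))
          · exact Or.inr (Or.inr (by linarith))
      · -- a diagonal of the same copy
        by_cases hQQ : Q'' = Q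
        · subst hQQ
          rcases hπe with rfl | rfl
          · -- the diagonal of this very probe: its left edge is to the right of ξ
            obtain ⟨x1, x2, x3, x4, x5, x6⟩ := xi_fact (P := P'') q2 q5
            have hDl : (Dr (ptop P'') (tmapP P'' Q'')).l =
              (tmapP P'' Q'').a + ((tmapP P'' Q'').b-(tmapP P'' Q'').a)*(2/5) := Dr_l hg
            exact Or.inr (Or.inl (by linarith))
          · exact absurd (Finset.mem_union_right _ (mem_singleton_self _)) hncr
        · -- diagonal of a different inner probe: columns are disjoint
          have hgg := Dguard hF hP hQ''
          obtain ⟨f1, f2, f3, -⟩ := D_coords hgg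
          rcases tq_disj hF hP hQ hQ'' (fun h => hQQ (h.symm)) with e | e
          · exact Or.inr (Or.inl (by linarith))
          · exact Or.inl (by linarith)
    · -- a rect of a different outer probe's inner world
      have hRm : InMid R P'' := by
        rcases hinner with ⟨R₀, hR₀, rfl⟩ | ⟨Q'', hQ'', rfl⟩
        · exact inner_inmid hF hP'' hR₀
        · exact D_inmid hF hP'' hQ''
      obtain ⟨-, hab'', -, -, hcd'', -⟩ := hF.g1 P'' hP''
      have e1'' := tx0_gt hab''
      have e2'' := tx1_lt hab''
      obtain ⟨z1, z2, z3, z4⟩ := hRm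
      rcases hF.g6 P hP P'' hP'' (fun h => hPP h.symm) with e | e
      · exact Or.inr (Or.inl (by linarith))
      · exact Or.inl (by linarith)

/-- the x-extent of each new probe sits strictly inside the inner-probe column,
    which itself sits strictly inside the outer gap -/
lemma probe_xrange (hF : Good k F) (hP : P ∈ F.probes) (hQ : Q ∈ F.probes) {π : Probe}
    (hπe : π = xiP P (tmapP P Q) ∨ π = muP (ptop P) P (tmapP P Q)) :
    (tmapP P Q).a < π.a ∧ π.a < π.b ∧ π.b < (tmapP P Q).b ∧ P.a < π.a ∧ π.b < P.b := by
  obtain ⟨h0, hab, h1, h2, hcd, h3⟩ := hF.g1 P hP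
  have e1 := tx0_gt hab
  have e2 := tx1_lt hab
  obtain ⟨q1, q2, q3, q4, q5, q6⟩ := tq_coords hF hP hQ
  have hg := Dguard hF hP hQ
  obtain ⟨d1, d2, d3, d4, d5, d6, d7⟩ := D_coords hg
  rcases hπe with rfl | rfl
  · obtain ⟨x1, x2, x3, x4, x5, x6⟩ := xi_fact (P := P) q2 q5
    have hDl : (Dr (ptop P) (tmapP P Q)).l =
        (tmapP P Q).a + ((tmapP P Q).b-(tmapP P Q).a)*(2/5) := Dr_l hg
    exact ⟨x1, x2, by linarith, by linarith, by linarith⟩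
  · obtain ⟨x1, x2, x3, x4, x5, x6⟩ := mu_fact (P := P) hg
    exact ⟨by linarith, x2, by linarith, by linarith, by linarith⟩

lemma step_g6 (hF : Good k F) :
    ∀ π ∈ (step F).probes, ∀ π' ∈ (step F).probes, π ≠ π' →
      π.b ≤ π'.a ∨ π'.b ≤ π.a := by
  intro π hπ π' hπ' hne
  obtain ⟨P, hP, Q, hQ, hπe⟩ := stepP_cases hπ
  obtain ⟨P', hP', Q', hQ', hπe'⟩ := stepP_cases hπ'
  obtain ⟨y1, y2, y3, y4, y5⟩ := probe_xrange hF hP hQ hπe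
  obtain ⟨z1, z2, z3, z4, z5⟩ := probe_xrange hF hP' hQ' hπe'
  by_cases hPP : P = P'
  · subst hPP
    by_cases hQQ : Q = Q'
    · subst hQQ
      -- same (P, Q): must be the ξ/μ pair
      have hg := Dguard hF hP hQ
      obtain ⟨d1, d2, d3, d4, d5, d6, d7⟩ := D_coords hg
      obtain ⟨q1, q2, q3, q4, q5, q6⟩ := tq_coords hF hP hQ
      have hDl : (Dr (ptop P) (tmapP P Q)).l =
          (tmapP P Q).a + ((tmapP P Q).b-(tmapP P Q).a)*(2/5) := Dr_l hg
      obtain ⟨x1, x2, x3, x4, x5, x6⟩ := xi_fact (P := P) q2 q5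
      obtain ⟨w1, w2, w3, w4, w5, w6⟩ := mu_fact (P := P) hg
      rcases hπe with rfl | rfl <;> rcases hπe' with rfl | rfl
      · exact absurd rfl hne
      · exact Or.inl (by linarith)
      · exact Or.inr (by linarith)
      · exact absurd rfl hne
    · rcases tq_disj hF hP hQ hQ' hQQ with e | e
      · exact Or.inl (by linarith)
      · exact Or.inr (by linarith)
  · rcases hF.g6 P hP P' hP' hPP with e | e
    · exact Or.inl (by linarith)
    · exact Or.inr (by linarith)

lemma step_g7 (hF : Good k F) :
    ∀ π ∈ (step F).probes, ∀ R ∈ π.cr, ∀ S ∈ π.cr, R ≠ S → NAdj R S := by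
  intro π hπ R hR S hS hne
  obtain ⟨P, hP, Q, hQ, hπe⟩ := stepP_cases hπ
  have hcross : ∀ T ∈ (tmapP P Q).cr, ∀ U ∈ P.cr, NAdj T U := by
    intro T hT U hU
    obtain ⟨T₀, hT₀, rfl⟩ := mem_image.1 (tq_cr_sub hF hQ hT)
    exact core1 hF hP (inner_inmid hF hP hT₀) ((hF.g2 P hP).1 hU)
  have hDcross : ∀ U ∈ P.cr, NAdj (Dr (ptop P) (tmapP P Q)) U := fun U hU =>
    core1 hF hP (D_inmid hF hP hQ) ((hF.g2 P hP).1 hU)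
  rcases hπe with rfl | rfl
  · rcases mem_union.1 hR with h | h <;> rcases mem_union.1 hS with h' | h'
    · exact hF.g7 P hP R h S h' hne
    · exact (hcross S h' R h).symm
    · exact hcross R h S h'
    · exact tq_g7 hF hP hQ R h S h' hne
  · rcases mem_union.1 hR with h | h <;> rcases mem_union.1 hS with h' | h'
    · exact hF.g7 P hP R h S h' hne
    · rw [mem_singleton.1 h']
      exact (hDcross R h).symm
    · rw [mem_singleton.1 h]
      exact hDcross S h'
    · rw [mem_singleton.1 h, mem_singleton.1 h'] at hne
      exact absurd rfl hne

lemma inmid_unique (hF : Good k F) (hP : P ∈ F.probes) {P' : Probe} (hP' : P' ∈ F.probes)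
    (hne : P ≠ P') {Z : Rect} (hZ : InMid Z P) (hZ' : InMid Z P') : False := by
  have := core2 hF hP hP' hne hZ hZ'
  have h1 := Z.hlr
  have h2 := Z.hbt
  rcases this with h | h | h | h <;> linarith

lemma DD_not_cadj (hF : Good k F) (hP : P ∈ F.probes) {Q₁ Q₂ : Probe} (hQ₁ : Q₁ ∈ F.probes)
    (hQ₂ : Q₂ ∈ F.probes) :
    ¬ CAdj (Dr (ptop P) (tmapP P Q₁)) (Dr (ptop P) (tmapP P Q₂)) := by
  by_cases h : Q₁ = Q₂
  · subst h
    exact CAdj.irrefl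
  · obtain ⟨d1, d2, d3, -⟩ := D_coords (Dguard hF hP hQ₁)
    obtain ⟨f1, f2, f3, -⟩ := D_coords (Dguard hF hP hQ₂)
    refine NAdj.not_cadj (Or.inl ?_)
    rcases tq_disj hF hP hQ₁ hQ₂ h with e | e
    · exact Or.inl (by linarith)
    · exact Or.inr (Or.inl (by linarith))

lemma DI_mem (hF : Good k F) (hP : P ∈ F.probes) {Q₁ : Probe} (hQ₁ : Q₁ ∈ F.probes)
    {R₀ : Rect} (hR₀ : R₀ ∈ F.rects)
    (h : CAdj (Dr (ptop P) (tmapP P Q₁)) (tmapR P R₀)) :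
    tmapR P R₀ ∈ (tmapP P Q₁).cr := by
  by_contra hn
  exact NAdj.not_cadj (Or.inl (D_nadj_notcr hF hP hQ₁ _ (mem_image_of_mem _ hR₀) hn)) h

lemma step_g8 (hF : Good k F) :
    ∀ R ∈ (step F).rects, ∀ S ∈ (step F).rects, ∀ T ∈ (step F).rects,
      CAdj R S → CAdj R T → CAdj S T → False := by
  intro R hR S hS T hT aRS aRT aST
  -- first: adjacency never crosses the old/inner boundary or distinct inner copies
  have key : ∀ X ∈ (step F).rects, ∀ Y ∈ (step F).rects, CAdj X Y →
      (X ∈ F.rects ∧ Y ∈ F.rects) ∨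
      ∃ P ∈ F.probes,
        ((∃ R₀ ∈ F.rects, X = tmapR P R₀) ∨ ∃ Q ∈ F.probes, X = Dr (ptop P) (tmapP P Q)) ∧
        ((∃ R₀ ∈ F.rects, Y = tmapR P R₀) ∨ ∃ Q ∈ F.probes, Y = Dr (ptop P) (tmapP P Q)) := by
    intro X hX Y hY aXY
    have hXmid : ∀ (Z : Rect), ∀ P₀, P₀ ∈ F.probes →
        ((∃ R₀ ∈ F.rects, Z = tmapR P₀ R₀) ∨ ∃ Q ∈ F.probes, Z = Dr (ptop P₀) (tmapP P₀ Q)) →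
        InMid Z P₀ := by
      rintro Z P₀ hP₀ (⟨R₀, hR₀, rfl⟩ | ⟨Q₀, hQ₀, rfl⟩)
      · exact inner_inmid hF hP₀ hR₀
      · exact D_inmid hF hP₀ hQ₀
    rcases step_cases hX with hXA | ⟨P₁, hP₁, hXi⟩ <;>
      rcases step_cases hY with hYA | ⟨P₂, hP₂, hYi⟩
    · exact Or.inl ⟨hXA, hYA⟩
    · exact absurd aXY.symm (NAdj.not_cadj (core1 hF hP₂ (hXmid Y P₂ hP₂ hYi) hXA))
    · exact absurd aXY (NAdj.not_cadj (core1 hF hP₁ (hXmid X P₁ hP₁ hXi) hYA))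
    · by_cases hPP : P₁ = P₂
      · subst hPP
        exact Or.inr ⟨P₁, hP₁, hXi, hYi⟩
      · exact absurd aXY (NAdj.not_cadj (Or.inl
          (core2 hF hP₁ hP₂ hPP (hXmid X P₁ hP₁ hXi) (hXmid Y P₂ hP₂ hYi))))
  rcases key R hR S hS aRS with ⟨hRA, hSA⟩ | ⟨P, hP, hRi, hSi⟩
  · -- R, S old; then T must be old as well
    rcases key R hR T hT aRT with ⟨-, hTA⟩ | ⟨P, hP, hRi, hTi⟩
    · exact hF.g8 R hRA S hSA T hTA aRS aRT aST
    · rcases hRi with ⟨R₀, hR₀, rfl⟩ | ⟨Q₀, hQ₀, rfl⟩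
      · exact inmid_not_A hF hP (inner_inmid hF hP hR₀) hRA
      · exact inmid_not_A hF hP (D_inmid hF hP hQ₀) hRA
  · -- R, S inner of P; T as well (since T adjacent to R)
    have hTi : (∃ R₀ ∈ F.rects, T = tmapR P R₀) ∨ ∃ Q ∈ F.probes, T = Dr (ptop P) (tmapP P Q) := by
      rcases key R hR T hT aRT with ⟨hRA, -⟩ | ⟨P', hP', hRi', hTi'⟩
      · exfalso
        rcases hRi with ⟨R₀, hR₀, rfl⟩ | ⟨Q₀, hQ₀, rfl⟩
        · exact inmid_not_A hF hP (inner_inmid hF hP hR₀) hRA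
        · exact inmid_not_A hF hP (D_inmid hF hP hQ₀) hRA
      · by_cases hPP : P = P'
        · subst hPP; exact hTi'
        · exfalso
          have h1 : InMid R P := by
            rcases hRi with ⟨R₀, hR₀, rfl⟩ | ⟨Q₀, hQ₀, rfl⟩
            · exact inner_inmid hF hP hR₀
            · exact D_inmid hF hP hQ₀
          have h2 : InMid R P' := by
            rcases hRi' with ⟨R₀, hR₀, rfl⟩ | ⟨Q₀, hQ₀, rfl⟩
            · exact inner_inmid hF hP' hR₀
            · exact D_inmid hF hP' hQ₀
          exact inmid_unique hF hP hP' hPP h1 h2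
    obtain ⟨-, hab, -, -, hcd, -⟩ := hF.g1 P hP
    rcases hRi with ⟨R₀, hR₀, rfl⟩ | ⟨Q₁, hQ₁, rfl⟩ <;>
      rcases hSi with ⟨S₀, hS₀, rfl⟩ | ⟨Q₂, hQ₂, rfl⟩ <;>
      rcases hTi with ⟨T₀, hT₀, rfl⟩ | ⟨Q₃, hQ₃, rfl⟩
    · exact hF.g8 R₀ hR₀ S₀ hS₀ T₀ hT₀ ((tmapR_cadj hab hcd).1 aRS)
        ((tmapR_cadj hab hcd).1 aRT) ((tmapR_cadj hab hcd).1 aST)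
    · -- T is a diagonal : R₀, S₀ cross Q₃
      have m1 := DI_mem hF hP hQ₃ hR₀ aRT.symm
      have m2 := DI_mem hF hP hQ₃ hS₀ aST.symm
      have hne : tmapR P R₀ ≠ tmapR P S₀ := fun h => by rw [h] at aRS; exact CAdj.irrefl aRS
      exact NAdj.not_cadj (tq_g7 hF hP hQ₃ _ m1 _ m2 hne) aRS
    · have m1 := DI_mem hF hP hQ₂ hR₀ aRS.symm
      have m2 := DI_mem hF hP hQ₂ hT₀ aST
      have hne : tmapR P R₀ ≠ tmapR P T₀ := fun h => by rw [h] at aRT; exact CAdj.irrefl aRT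
      exact NAdj.not_cadj (tq_g7 hF hP hQ₂ _ m1 _ m2 hne) aRT
    · exact DD_not_cadj hF hP hQ₂ hQ₃ aST
    · have m1 := DI_mem hF hP hQ₁ hS₀ aRS
      have m2 := DI_mem hF hP hQ₁ hT₀ aRT
      have hne : tmapR P S₀ ≠ tmapR P T₀ := fun h => by rw [h] at aST; exact CAdj.irrefl aST
      exact NAdj.not_cadj (tq_g7 hF hP hQ₁ _ m1 _ m2 hne) aST
    · exact DD_not_cadj hF hP hQ₁ hQ₃ aRT
    · exact DD_not_cadj hF hP hQ₁ hQ₂ aRS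
    · exact DD_not_cadj hF hP hQ₁ hQ₂ aRS

lemma step_g9 (hF : Good k F) :
    ∀ φ : Rect → ℕ,
      (∀ R ∈ (step F).rects, ∀ S ∈ (step F).rects, CAdj R S → φ R ≠ φ S) →
      ∃ π ∈ (step F).probes, k + 1 ≤ (π.cr.image φ).card := by
  intro φ hφ
  -- restrict to the old copy
  obtain ⟨P, hP, hX⟩ := hF.g9 φ (fun R hR S hS h => hφ R (mem_step_A hR) S (mem_step_A hS) h)
  obtain ⟨-, hab, -, -, hcd, -⟩ := hF.g1 P hP
  -- restrict to the inner copy of P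
  obtain ⟨Q, hQ, hY⟩ := hF.g9 (φ ∘ tmapR P) (fun R hR S hS h =>
    hφ _ (mem_step_I hP hR) _ (mem_step_I hP hS) ((tmapR_cadj hab hcd).2 h))
  have hYim : (Q.cr.image (φ ∘ tmapR P)).card = ((tmapP P Q).cr.image φ).card := by
    have : (tmapP P Q).cr.image φ = Q.cr.image (φ ∘ tmapR P) := image_image
    rw [this]
  rw [hYim] at hY
  set X := P.cr.image φ with hXdef
  set Y := (tmapP P Q).cr.image φ with hYdef
  rcases le_or_gt (k+1) ((X ∪ Y).card) with hbig | hsmall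
  · -- the probe ξ catches at least k+1 colours
    refine ⟨xiP P (tmapP P Q), mem_step_xi hP hQ, ?_⟩
    have : (xiP P (tmapP P Q)).cr.image φ = X ∪ Y := by
      show (P.cr ∪ (tmapP P Q).cr).image φ = _
      rw [Finset.image_union]
    rw [this]
    exact hbig
  · -- X = Y, and the diagonal has a colour outside X
    have hXY : X = Y := by
      have h1 : X = X ∪ Y := eq_of_subset_of_card_le Finset.subset_union_left (by omega)
      have h2 : Y = X ∪ Y := eq_of_subset_of_card_le Finset.subset_union_right (by omega)
      rw [← h2] at h1
      exact h1
    have hDnot : φ (Dr (ptop P) (tmapP P Q)) ∉ X := by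
      rw [hXY]
      intro hc
      obtain ⟨S, hS, hSe⟩ := mem_image.1 hc
      exact hφ _ (mem_step_D hP hQ) S (image_sub_step hP (tq_cr_sub hF hQ hS))
        (D_cadj_cr hF hP hQ S hS) hSe.symm
    refine ⟨muP (ptop P) P (tmapP P Q), mem_step_mu hP hQ, ?_⟩
    have him : (muP (ptop P) P (tmapP P Q)).cr.image φ
        = insert (φ (Dr (ptop P) (tmapP P Q))) X := by
      show (P.cr ∪ {Dr (ptop P) (tmapP P Q)}).image φ = _
      rw [Finset.image_union, Finset.image_singleton]
      exact Finset.union_comm _ _ |>.trans (by rw [Finset.insert_eq])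
    rw [him, card_insert_of_notMem hDnot]
    omega

lemma step_g10 (hF : Good k F) :
    (step F).rects.card ≤ 2^(4^(k+1)) ∧ (step F).probes.card ≤ 2^(4^(k+1)) := by
  obtain ⟨hs, hp⟩ := hF.g10
  set N := 2^(4^k) with hNdef
  have hN1 : 1 ≤ N := Nat.one_le_two_pow
  have h4 : 2 + 2 * 4^k ≤ 4^(k+1) := by
    have : 1 ≤ 4^k := Nat.one_le_pow _ _ (by norm_num)
    calc 2 + 2 * 4^k ≤ 2 * 4^k + 2 * 4^k := by omega
    _ = 4 * 4^k := by ring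
    _ = 4^(k+1) := by rw [pow_succ]; ring
  have hNN : N * N * 4 = 2^(2 + 2*4^k) := by
    rw [hNdef, ← pow_add, pow_add]
    ring
  constructor
  · calc (step F).rects.card
        ≤ F.rects.card + (F.probes.biUnion (fun P =>
            F.rects.image (tmapR P) ∪ F.probes.image (fun Q => Dr (ptop P) (tmapP P Q)))).card :=
          card_union_le _ _
    _ ≤ F.rects.card + F.probes.card * (F.rects.card + F.probes.card) := by
        refine Nat.add_le_add_left ?_ _
        refine le_trans (card_biUnion_le) ?_
        refine le_trans (Finset.sum_le_card_nsmul _ _ (F.rects.card + F.probes.card) ?_) ?_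
        · intro P hP
          exact le_trans (card_union_le _ _) (Nat.add_le_add (card_image_le) (card_image_le))
        · simp [smul_eq_mul]
    _ ≤ N + N * (N + N) := by
        refine Nat.add_le_add hs (Nat.mul_le_mul hp (Nat.add_le_add hs hp))
    _ ≤ N * N * 4 := by nlinarith
    _ = 2^(2 + 2*4^k) := hNN
    _ ≤ 2^(4^(k+1)) := Nat.pow_le_pow_right (by norm_num) h4
  · calc (step F).probes.card
        ≤ ∑ P ∈ F.probes, (F.probes.biUnion (fun Q =>
            ({xiP P (tmapP P Q), muP (ptop P) P (tmapP P Q)} : Finset Probe))).card :=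
          card_biUnion_le
    _ ≤ ∑ P ∈ F.probes, F.probes.card * 2 := by
        refine Finset.sum_le_sum ?_
        intro P hP
        refine le_trans card_biUnion_le ?_
        refine le_trans (Finset.sum_le_card_nsmul _ _ 2 ?_) ?_
        · intro Q hQ
          exact card_insert_le _ _ |>.trans (by simp)
        · simp [smul_eq_mul]
    _ = F.probes.card * (F.probes.card * 2) := by
        rw [Finset.sum_const, smul_eq_mul]
    _ ≤ N * (N * 2) := Nat.mul_le_mul hp (Nat.mul_le_mul hp le_rfl)
    _ ≤ N * N * 4 := by nlinarith
    _ = 2^(2 + 2*4^k) := hNN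
    _ ≤ 2^(4^(k+1)) := Nat.pow_le_pow_right (by norm_num) h4

end ctx

theorem good_step {k : ℕ} {F : Fam} (hF : Good k F) : Good (k+1) (step F) where
  g0 := step_g0 hF
  g1 := step_g1 hF
  g2 := step_g2 hF
  g3 := step_g3 hF
  g4 := step_g4 hF
  g6 := step_g6 hF
  g7 := step_g7 hF
  g8 := step_g8 hF
  g9 := step_g9 hF
  g10 := step_g10 hF

end Burl

namespace Burl

open Finset

lemma good_base : Good 1 base := by
  have hcadj : ∀ R : Rect, ¬ CAdj R R := fun R => CAdj.irrefl
  refine ⟨?_, ?_, ?_, ?_, ?_, ?_, ?_, ?_, ?_, ?_⟩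
  · intro R hR
    simp only [base, Finset.mem_singleton] at hR
    subst hR
    norm_num
  · intro P hP
    simp only [base, Finset.mem_singleton] at hP
    subst hP
    norm_num
  · intro P hP
    simp only [base, Finset.mem_singleton] at hP
    subst hP
    exact ⟨by intro R hR; exact hR, ⟨_, mem_singleton_self _⟩⟩
  · intro P hP R hR
    simp only [base, Finset.mem_singleton] at hP
    subst hP
    simp only [Finset.mem_singleton] at hR
    subst hR
    refine ⟨by norm_num, by norm_num, by norm_num, Or.inr (by norm_num)⟩
  · intro P hP R hR hncr
    simp only [base, Finset.mem_singleton] at hP hR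
    subst hP
    exact absurd (by simp [hR]) hncr
  · intro P hP P' hP' hne
    simp only [base, Finset.mem_singleton] at hP hP'
    exact absurd (hP.trans hP'.symm) hne
  · intro P hP R hR S hS hne
    simp only [base, Finset.mem_singleton] at hP
    subst hP
    simp only [Finset.mem_singleton] at hR hS
    exact absurd (hR.trans hS.symm) hne
  · intro R hR S hS T hT aRS aRT aST
    simp only [base, Finset.mem_singleton] at hR hS
    exact absurd (hR.trans hS.symm) (by rintro rfl; exact hcadj R aRS)
  · intro φ hφ
    refine ⟨_, mem_singleton_self _, ?_⟩
    show 1 ≤ (({⟨1/4, 3/4, 1/2, 5/8, by norm_num, by norm_num⟩} : Finset Rect).image φ).card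
    rw [Finset.image_singleton, Finset.card_singleton]
  · constructor <;> simp [base]

lemma good_burl (n : ℕ) : Good (n+1) (burl n) := by
  induction n with
  | zero => exact good_base
  | succ m ih => exact good_step ih

end Burl


open Burl

/-- For every `k ≥ 1` there is a family of at most `2 ^ 2 ^ (2 * k)` rectangles whose
overlap graph is triangle-free and has chromatic number at least `k`. -/
theorem stmt2 (k : ℕ) (hk : 1 ≤ k) :
    ∃ R : Finset Rect, (overlapGraph R).CliqueFree 3 ∧ R.card ≤ 2 ^ 2 ^ (2 * k) ∧
      (k : ℕ∞) ≤ (overlapGraph R).chromaticNumber := by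
  have hkk : k - 1 + 1 = k := by omega
  have hG : Good k (burl (k-1)) := by
    have := good_burl (k-1)
    rwa [hkk] at this
  set F := burl (k-1) with hFdef
  have hpow : (4:ℕ)^k = 2^(2*k) := by
    rw [pow_mul]
    norm_num
  refine ⟨F.rects, ?_, ?_, ?_⟩
  · -- triangle-free
    intro t ht
    rw [SimpleGraph.isNClique_iff] at ht
    obtain ⟨hcl, hcard⟩ := ht
    obtain ⟨a, b, c, hab, hac, hbc, rfl⟩ := Finset.card_eq_three.1 hcard
    have h1 : (overlapGraph F.rects).Adj a b :=
      hcl (by simp) (by simp) (Subtype.coe_ne_coe.1 (fun h => hab (Subtype.ext h)) :)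
    have h2 : (overlapGraph F.rects).Adj a c :=
      hcl (by simp) (by simp) (Subtype.coe_ne_coe.1 (fun h => hac (Subtype.ext h)) :)
    have h3 : (overlapGraph F.rects).Adj b c :=
      hcl (by simp) (by simp) (Subtype.coe_ne_coe.1 (fun h => hbc (Subtype.ext h)) :)
    exact hG.g8 a.1 a.2 b.1 b.2 c.1 c.2 (adj_iff.1 h1) (adj_iff.1 h2) (adj_iff.1 h3)
  · -- size
    rw [← hpow]
    exact hG.g10.1
  · -- chromatic number
    rw [SimpleGraph.chromaticNumber]
    refine le_iInf₂ ?_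
    intro n hn
    have hcol : (overlapGraph F.rects).Colorable n := hn
    obtain ⟨C⟩ := hcol
    classical
    set φ : Rect → ℕ := fun R => if h : R ∈ F.rects then (C ⟨R, h⟩ : Fin n).val else 0 with hφdef
    have hproper : ∀ R ∈ F.rects, ∀ S ∈ F.rects, CAdj R S → φ R ≠ φ S := by
      intro R hR S hS hadj
      have : (overlapGraph F.rects).Adj ⟨R, hR⟩ ⟨S, hS⟩ := adj_iff.2 hadj
      have hne := C.valid this
      simp only [hφdef, dif_pos hR, dif_pos hS]
      exact fun h => hne (Fin.val_injective h)
    obtain ⟨P, hP, hcard⟩ := hG.g9 φ hproper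
    have hsub : P.cr.image φ ⊆ Finset.range n := by
      intro x hx
      obtain ⟨R, hRcr, rfl⟩ := Finset.mem_image.1 hx
      have hR : R ∈ F.rects := (hG.g2 P hP).1 hRcr
      simp only [hφdef, dif_pos hR]
      exact Finset.mem_range.2 (C ⟨R, hR⟩).isLt
    have : k ≤ n := le_trans hcard (le_trans (Finset.card_le_card hsub) (by simp))
    exact_mod_cast this
end

section
/- For every integer k ≥ 1 there exists a triangle-free overlap game graph G (with some meta-forest M and representation μ) such that G has at most 2^(2^(2k)) vertices and the chromatic number of G is at least k. -/
/-- Closed intervals `[a, b]` and `[c, d]` overlap. -/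
def IntervalOverlap (a b c d : ℝ) : Prop :=
  (a < c ∧ c < b ∧ b < d) ∨ (c < a ∧ a < d ∧ d < b)

/-- A rooted forest on the vertex set `V`, given by a parent function with no cycles. -/
structure RootedForest (V : Type) where
  parent : V → Option V
  acyclic : ∀ v, ¬ Relation.TransGen (fun x y => parent y = some x) v v

/-- `M.anc x y` means `x ≠ y` and `x` is an ancestor of `y` in `M` (written `x ≺ y`). -/
def RootedForest.anc {V : Type} (M : RootedForest V) : V → V → Prop :=
  Relation.TransGen (fun x y => M.parent y = some x)

/-- `G` is an overlap game graph with meta-forest `M` and representation `v ↦ [μl v, μr v]`. -/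
structure IsOGG {V : Type} (G : SimpleGraph V) (M : RootedForest V) (μl μr : V → ℝ) : Prop where
  nondeg : ∀ v, μl v < μr v
  endpoints_lr : ∀ v w, μl v ≠ μr w
  endpoints_l : ∀ v w, v ≠ w → μl v ≠ μl w
  endpoints_r : ∀ v w, v ≠ w → μr v ≠ μr w
  g1 : ∀ x y, M.anc x y → μl x < μl y
  g2 : ∀ x y, G.Adj x y ↔
    (M.anc x y ∨ M.anc y x) ∧ IntervalOverlap (μl x) (μr x) (μl y) (μr y)
  g3 : ¬ ∃ x y z, M.anc x y ∧ M.anc y z ∧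
    IntervalOverlap (μl x) (μr x) (μl y) (μr y) ∧
    Set.Icc (μl z) (μr z) ⊆ Set.Icc (μl x) (μr x) ∩ Set.Icc (μl y) (μr y)

/-- A vertex is secondary if its interval is contained in the interval of its parent. -/
def Secondary {V : Type} (M : RootedForest V) (μl μr : V → ℝ) (v : V) : Prop :=
  ∃ u, M.parent v = some u ∧ Set.Icc (μl v) (μr v) ⊆ Set.Icc (μl u) (μr u)

def Primary {V : Type} (M : RootedForest V) (μl μr : V → ℝ) (v : V) : Prop :=
  ¬ Secondary M μl μr v

/-- `P(u)`: the set of vertices `v` such that `u` is the first primary vertex on the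
path in `M` from `v` towards the root (including `u` itself). -/
def Pset {V : Type} (M : RootedForest V) (μl μr : V → ℝ) (u : V) : Set V :=
  {v | (u = v ∨ M.anc u v) ∧
    ∀ w, (w = v ∨ M.anc w v) → M.anc u w → Secondary M μl μr w}

def IsLeaf {V : Type} (M : RootedForest V) (v : V) : Prop := ∀ w, M.parent w ≠ some v

/-- `P` is the vertex set of a root-to-leaf path of `M`. -/
def RootToLeafPath {V : Type} (M : RootedForest V) (P : Set V) : Prop :=
  ∃ v, IsLeaf M v ∧ P = {w | w = v ∨ M.anc w v}

/-- The number of vertices of the subtree of `M` rooted at `v`. -/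
noncomputable def subtreeSize {V : Type} (M : RootedForest V) (v : V) : ℕ :=
  Nat.card {w : V // w = v ∨ M.anc v w}

/-- `s` assigns to each non-leaf vertex a child whose subtree is largest. -/
def IsHeavyChildFun {V : Type} (M : RootedForest V) (s : V → V) : Prop :=
  ∀ u : V, (∃ w, M.parent w = some u) →
    M.parent (s u) = some u ∧ ∀ w, M.parent w = some u → subtreeSize M w ≤ subtreeSize M (s u)

/-- A heavy edge from `x` to its child `y = s x`. -/
def HeavyStep {V : Type} (M : RootedForest V) (s : V → V) (x y : V) : Prop :=
  M.parent y = some x ∧ y = s x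

/-- `x` and `y` lie on the same heavy path of the heavy-light decomposition given by `s`. -/
def SameHeavyPath {V : Type} (M : RootedForest V) (s : V → V) (x y : V) : Prop :=
  Relation.EqvGen (HeavyStep M s) x y


section OGGAux

variable {V : Type}

def Anc (par : V → Option V) : V → V → Prop :=
  Relation.TransGen (fun x y => par y = some x)

def ChainOf (par : V → Option V) (z v : V) : Prop := z = v ∨ Anc par z v

def AdjOf (par : V → Option V) (l r : V → ℝ) (x y : V) : Prop :=
  (Anc par x y ∨ Anc par y x) ∧ IntervalOverlap (l x) (r x) (l y) (r y)

lemma chainOf_refl (par : V → Option V) (v : V) : ChainOf par v v := Or.inl rfl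

lemma anc_iff_parent (par : V → Option V) (z v : V) :
    Anc par z v ↔ ∃ v', par v = some v' ∧ ChainOf par z v' := by
  unfold Anc ChainOf
  rw [Relation.TransGen.tail'_iff]
  constructor
  · rintro ⟨b, hb, hstep⟩
    exact ⟨b, hstep, by rw [Relation.reflTransGen_iff_eq_or_transGen] at hb; tauto⟩
  · rintro ⟨v', hstep, hc⟩
    exact ⟨v', by rw [Relation.reflTransGen_iff_eq_or_transGen]; tauto, hstep⟩

variable {par : V → Option V} {rk : V → ℕ}

lemma anc_rk (hrk : ∀ ⦃v w⦄, par v = some w → rk w < rk v) {z v : V}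
    (h : Anc par z v) : rk z < rk v := by
  induction h with
  | single h => exact hrk h
  | tail _ h ih => exact lt_trans ih (hrk h)

lemma anc_irrefl (hrk : ∀ ⦃v w⦄, par v = some w → rk w < rk v) (v : V) :
    ¬ Anc par v v := fun h => lt_irrefl _ (anc_rk hrk h)

lemma anc_total_aux (hrk : ∀ ⦃v w⦄, par v = some w → rk w < rk v) :
    ∀ (n : ℕ) (v z z' : V), rk v < n → Anc par z v → Anc par z' v →
      z = z' ∨ Anc par z z' ∨ Anc par z' z := by
  intro n
  induction n with
  | zero => intro v z z' hv; omega
  | succ n ih =>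
  intro v z z' hv hz hz'
  rw [anc_iff_parent] at hz hz'
  obtain ⟨p, hp, hcz⟩ := hz
  obtain ⟨p', hp', hcz'⟩ := hz'
  rw [hp] at hp'; injection hp' with hpp; subst hpp
  rcases hcz with rfl | hz
  · rcases hcz' with rfl | hz'
    · exact Or.inl rfl
    · exact Or.inr (Or.inr hz')
  · rcases hcz' with rfl | hz'
    · exact Or.inr (Or.inl hz)
    · exact ih p z z' (by have := hrk hp; omega) hz hz'

lemma anc_total (hrk : ∀ ⦃v w⦄, par v = some w → rk w < rk v)
    (v z z' : V) (hz : Anc par z v) (hz' : Anc par z' v) :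
    z = z' ∨ Anc par z z' ∨ Anc par z' z :=
  anc_total_aux hrk (rk v + 1) v z z' (Nat.lt_succ_self _) hz hz'

lemma chain_total (hrk : ∀ ⦃v w⦄, par v = some w → rk w < rk v) {v z z' : V}
    (hz : ChainOf par z v) (hz' : ChainOf par z' v) :
    z = z' ∨ Anc par z z' ∨ Anc par z' z := by
  rcases hz with rfl | hz
  · rcases hz' with rfl | hz'
    · exact Or.inl rfl
    · exact Or.inr (Or.inr hz')
  · rcases hz' with rfl | hz'
    · exact Or.inr (Or.inl hz)
    · exact anc_total hrk v z z' hz hz'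

lemma intervalOverlap_symm {a b c d : ℝ} (h : IntervalOverlap a b c d) :
    IntervalOverlap c d a b := by unfold IntervalOverlap at *; tauto

lemma adjOf_symm {l r : V → ℝ} {x y : V} (h : AdjOf par l r x y) : AdjOf par l r y x :=
  ⟨h.1.symm, intervalOverlap_symm h.2⟩

end OGGAux

structure Gad (j : ℕ) where
  V : Type
  fin : Fintype V
  dec : DecidableEq V
  nem : Nonempty V
  par : V → Option V
  rk : V → ℕ
  rk_lt : ∀ ⦃v w⦄, par v = some w → rk w < rk v
  rk_bd : ∀ v, rk v < @Fintype.card V fin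
  l : V → ℝ
  r : V → ℝ
  rgl : V → ℝ
  rgr : V → ℝ
  l_pos : ∀ v, 0 < l v
  r_half : ∀ v, r v < 1/2
  rg1 : ∀ v, l v < rgl v
  rg2 : ∀ v, rgl v < rgr v
  rg3 : ∀ v, rgr v < r v
  l_inj : Function.Injective l
  r_inj : Function.Injective r
  lr_ne : ∀ v w, l v ≠ r w
  rg_disj : ∀ v w, v ≠ w → rgr v < rgl w ∨ rgr w < rgl v
  l_empty : ∀ v w, l v < rgl w ∨ rgr w < l v
  r_empty : ∀ v w, r v < rgl w ∨ rgr w < r v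
  g1 : ∀ ⦃z v⦄, Anc par z v → l z < l v
  chain_l : ∀ ⦃z v⦄, ChainOf par z v → l z < rgl v
  pairs : ∀ ⦃v z z'⦄, ChainOf par z v → ChainOf par z' v →
    IntervalOverlap (l z) (r z) (l z') (r z') → min (r z) (r z') < rgl v
  tri : ∀ ⦃x y z⦄, AdjOf par l r x y → AdjOf par l r x z → AdjOf par l r y z → False
  forcing : ∀ φ : V → ℕ, (∀ x y, AdjOf par l r x y → φ x ≠ φ y) →
    ∃ (o : V) (K : Finset V),
      (∀ z ∈ K, ChainOf par z o) ∧
      (∀ z ∈ K, l z < rgl o ∧ rgr o < r z) ∧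
      (∀ z, ChainOf par z o → z ∉ K → r z < rgl o) ∧
      j ≤ (K.image φ).card

namespace Gad

lemma lt_lr {j : ℕ} (g : Gad j) (v : g.V) : g.l v < g.r v :=
  lt_trans (g.rg1 v) (lt_trans (g.rg2 v) (g.rg3 v))

noncomputable def base : Gad 1 where
  V := Unit
  fin := inferInstance
  dec := inferInstance
  nem := ⟨()⟩
  par := fun _ => none
  rk := fun _ => 0
  rk_lt := by intro v w h; simp at h
  rk_bd := by intro v; simp
  l := fun _ => 1/8
  r := fun _ => 3/8
  rgl := fun _ => 3/16
  rgr := fun _ => 1/4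
  l_pos := fun _ => by norm_num
  r_half := fun _ => by norm_num
  rg1 := fun _ => by norm_num
  rg2 := fun _ => by norm_num
  rg3 := fun _ => by norm_num
  l_inj := fun a b _ => rfl
  r_inj := fun a b _ => rfl
  lr_ne := fun _ _ => by norm_num
  rg_disj := fun v w h => absurd rfl h
  l_empty := fun _ _ => by norm_num
  r_empty := fun _ _ => by norm_num
  g1 := by
    intro z v h
    exfalso
    rw [anc_iff_parent] at h
    obtain ⟨v', hv', _⟩ := h
    simp at hv'
  chain_l := by
    rintro z v (rfl | h)
    · norm_num
    · exfalso; rw [anc_iff_parent] at h; obtain ⟨v', hv', _⟩ := h; simp at hv'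
  pairs := by
    rintro v z z' _ _ h
    exfalso
    rcases h with ⟨h1, _⟩ | ⟨h1, _⟩ <;> exact lt_irrefl _ h1
  tri := by
    rintro x y z ⟨_, (⟨h1, _⟩ | ⟨h1, _⟩)⟩ _ _ <;> exact lt_irrefl _ h1
  forcing := by
    intro φ _
    refine ⟨(), {()}, ?_, ?_, ?_, ?_⟩
    · intro z _; exact Or.inl rfl
    · intro z _; norm_num
    · intro z _ hz; exact absurd (Finset.mem_singleton_self ()) hz
    · simp

section Compose

variable {j : ℕ} (g : Gad j)

local instance : Fintype g.V := g.fin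
local instance : DecidableEq g.V := g.dec

/-- Vertex type of the composed gadget: F-nodes, S-nodes, P-nodes. -/
abbrev CV := g.V ⊕ ((g.V × g.V) ⊕ (g.V × g.V))

local notation "NF" w => (Sum.inl w : CV g)
local notation "NS" u ", " w => (Sum.inr (Sum.inl (u, w)) : CV g)
local notation "NP" u ", " v => (Sum.inr (Sum.inr (u, v)) : CV g)

def cpar : CV g → Option (CV g)
  | Sum.inl w => (g.par w).map Sum.inl
  | Sum.inr (Sum.inl (u, w)) =>
      match g.par w with
      | some w' => some (Sum.inr (Sum.inl (u, w')))
      | none => some (Sum.inl u)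
  | Sum.inr (Sum.inr (u, v)) => some (Sum.inr (Sum.inl (u, v)))

def crk : CV g → ℕ
  | Sum.inl w => g.rk w
  | Sum.inr (Sum.inl (_, w)) => Fintype.card g.V + g.rk w
  | Sum.inr (Sum.inr _) => Fintype.card g.V + Fintype.card g.V

/-- description of ancestors of an S-node `(u,w)`. -/
def DescS (z : CV g) (u w : g.V) : Prop :=
  (∃ w₀, z = (Sum.inr (Sum.inl (u, w₀)) : CV g) ∧ Anc g.par w₀ w) ∨
  (∃ u₀, z = (Sum.inl u₀ : CV g) ∧ ChainOf g.par u₀ u)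

def Desc (z : CV g) : CV g → Prop
  | Sum.inl w => ∃ w₀, z = (Sum.inl w₀ : CV g) ∧ Anc g.par w₀ w
  | Sum.inr (Sum.inl (u, w)) => g.DescS z u w
  | Sum.inr (Sum.inr (u, v)) => z = (Sum.inr (Sum.inl (u, v)) : CV g) ∨ g.DescS z u v

lemma anc_desc {z v : CV g} (h : Anc g.cpar z v) : g.Desc z v := by
  induction h with
  | single h =>
    rename_i b
    rcases b with w | ⟨u, w⟩ | ⟨u, v⟩
    · simp only [cpar, Option.map_eq_some_iff] at h
      obtain ⟨w', hw', rfl⟩ := h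
      exact ⟨w', rfl, Relation.TransGen.single hw'⟩
    · simp only [cpar] at h
      rcases hp : g.par w with _ | w'
      · rw [hp] at h
        simp only [Option.some_inj] at h
        exact Or.inr ⟨u, h.symm, Or.inl rfl⟩
      · rw [hp] at h
        simp only [Option.some_inj] at h
        exact Or.inl ⟨w', h.symm, Relation.TransGen.single hp⟩
    · simp only [cpar, Option.some_inj] at h
      exact Or.inl h.symm
  | @tail b c _ h ih =>
    rcases c with w | ⟨u, w⟩ | ⟨u, v⟩
    · simp only [cpar, Option.map_eq_some_iff] at h
      obtain ⟨w', hw', rfl⟩ := h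
      obtain ⟨w₀, rfl, h₀⟩ := ih
      exact ⟨w₀, rfl, Relation.TransGen.tail h₀ hw'⟩
    · simp only [cpar] at h
      rcases hp : g.par w with _ | w'
      · rw [hp] at h
        simp only [Option.some_inj] at h
        subst h
        obtain ⟨u₀, rfl, h₀⟩ := ih
        exact Or.inr ⟨u₀, rfl, Or.inr h₀⟩
      · rw [hp] at h
        simp only [Option.some_inj] at h
        subst h
        rcases ih with ⟨w₀, rfl, h₀⟩ | ⟨u₀, rfl, h₀⟩
        · exact Or.inl ⟨w₀, rfl, Relation.TransGen.tail h₀ hp⟩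
        · exact Or.inr ⟨u₀, rfl, h₀⟩
    · simp only [cpar, Option.some_inj] at h
      subst h
      exact Or.inr ih

lemma ancF {a b : g.V} (h : Anc g.par a b) :
    Anc g.cpar (Sum.inl a) (Sum.inl b) := by
  refine Relation.TransGen.lift (r := fun x y => g.par y = some x) (p := fun x y => g.cpar y = some x) Sum.inl (fun x y hxy => ?_) _ _ h
  simp [cpar, hxy, Function.onFun]

lemma ancS (u : g.V) {a b : g.V} (h : Anc g.par a b) :
    Anc g.cpar (Sum.inr (Sum.inl (u, a))) (Sum.inr (Sum.inl (u, b))) := by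
  refine Relation.TransGen.lift (r := fun x y => g.par y = some x) (p := fun x y => g.cpar y = some x) (fun w => Sum.inr (Sum.inl (u, w))) (fun x y hxy => ?_) _ _ h
  simp [cpar, hxy, Function.onFun]

lemma anc_root_aux (u : g.V) : ∀ n (w : g.V), g.rk w < n →
    Anc g.cpar (Sum.inl u) (Sum.inr (Sum.inl (u, w))) := by
  intro n
  induction n with
  | zero => intro w h; omega
  | succ n ih =>
    intro w hw
    rcases hp : g.par w with _ | w'
    · exact Relation.TransGen.single (by simp [cpar, hp])
    · exact Relation.TransGen.tail (ih w' (by have := g.rk_lt hp; omega)) (by simp [cpar, hp])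

lemma anc_root (u w : g.V) : Anc g.cpar (Sum.inl u) (Sum.inr (Sum.inl (u, w))) :=
  g.anc_root_aux u (g.rk w + 1) w (Nat.lt_succ_self _)

lemma desc_ancS {z : CV g} {u w : g.V} (h : g.DescS z u w) :
    Anc g.cpar z (Sum.inr (Sum.inl (u, w))) := by
  rcases h with ⟨w₀, rfl, h₀⟩ | ⟨u₀, rfl, h₀⟩
  · exact g.ancS u h₀
  · rcases h₀ with rfl | h₀
    · exact g.anc_root u₀ w
    · exact Relation.TransGen.trans (g.ancF h₀) (g.anc_root u w)

lemma desc_anc {z v : CV g} (h : g.Desc z v) : Anc g.cpar z v := by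
  rcases v with w | ⟨u, w⟩ | ⟨u, v⟩
  · obtain ⟨w₀, rfl, h₀⟩ := h
    exact g.ancF h₀
  · rcases h with ⟨w₀, rfl, h₀⟩ | ⟨u₀, rfl, h₀⟩
    · exact g.ancS u h₀
    · rcases h₀ with rfl | h₀
      · exact g.anc_root u₀ w
      · exact Relation.TransGen.trans (g.ancF h₀) (g.anc_root u w)
  · rcases h with rfl | h
    · exact Relation.TransGen.single (by simp [cpar])
    · exact Relation.TransGen.tail (g.desc_ancS h) (by simp [cpar])

lemma anc_iff_desc {z v : CV g} : Anc g.cpar z v ↔ g.Desc z v :=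
  ⟨g.anc_desc, g.desc_anc⟩

lemma c_rk_lt : ∀ ⦃v w : CV g⦄, g.cpar v = some w → g.crk w < g.crk v := by
  have hcard : ∀ v : g.V, g.rk v < Fintype.card g.V := g.rk_bd
  rintro (w | ⟨u, w⟩ | ⟨u, v⟩) z h
  · simp only [cpar, Option.map_eq_some_iff] at h
    obtain ⟨w', hw', rfl⟩ := h
    exact g.rk_lt hw'
  · simp only [cpar] at h
    rcases hp : g.par w with _ | w' <;> rw [hp] at h <;>
      simp only [Option.some_inj] at h <;> subst h <;> simp only [crk]
    · have := hcard u; omega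
    · have := g.rk_lt hp; omega
  · simp only [cpar, Option.some_inj] at h
    subst h
    simp only [crk]
    have := hcard v; omega

/-! Geometry of the composed gadget. -/

noncomputable def hh (u : g.V) : ℝ := (g.rgl u + g.rgr u) / 4
noncomputable def hq (u : g.V) : ℝ := (g.rgr u - g.rgl u) / 4
noncomputable def sg (u : g.V) (t : ℝ) : ℝ := g.hh u + g.hq u * t
noncomputable def pL (v : g.V) : ℝ := (g.rgl v + 3 * g.rgr v) / 4
noncomputable def sv (v : g.V) : ℝ := 1/2 + g.rgl v / 2
noncomputable def dv (v : g.V) : ℝ := (g.rgr v - g.rgl v) / 2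

noncomputable def cl : CV g → ℝ
  | Sum.inl w => g.l w / 2
  | Sum.inr (Sum.inl (u, w)) => g.sg u (g.l w)
  | Sum.inr (Sum.inr (u, v)) => g.sg u (g.pL v)

noncomputable def cr : CV g → ℝ
  | Sum.inl w => g.r w / 2
  | Sum.inr (Sum.inl (u, w)) => g.sg u (g.r w)
  | Sum.inr (Sum.inr (u, v)) => g.sg u (g.sv v + g.dv v / 2)

noncomputable def crgl : CV g → ℝ
  | Sum.inl w => g.rgl w / 2
  | Sum.inr (Sum.inl (u, w)) => g.sg u (g.rgl w)
  | Sum.inr (Sum.inr (u, v)) => g.sg u (g.sv v + g.dv v / 8)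

noncomputable def crgr : CV g → ℝ
  | Sum.inl w => (g.rgl w + g.rgr w) / 4
  | Sum.inr (Sum.inl (u, w)) => g.sg u ((g.rgl w + g.rgr w) / 2)
  | Sum.inr (Sum.inr (u, v)) => g.sg u (g.sv v + g.dv v / 4)

/-- basic ordering facts for one vertex -/
lemma bnd (u : g.V) :
    0 < g.l u ∧ g.l u < g.rgl u ∧ g.rgl u < g.rgr u ∧ g.rgr u < g.r u ∧ g.r u < 1/2 :=
  ⟨g.l_pos u, g.rg1 u, g.rg2 u, g.rg3 u, g.r_half u⟩

lemma hq_pos (u : g.V) : 0 < g.hq u := by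
  have := g.rg2 u; unfold hq; linarith

lemma sg_mono (u : g.V) {t₁ t₂ : ℝ} (h : t₁ < t₂) : g.sg u t₁ < g.sg u t₂ := by
  have := g.hq_pos u
  unfold sg; nlinarith

lemma sg_inj (u : g.V) {t₁ t₂ : ℝ} (h : g.sg u t₁ = g.sg u t₂) : t₁ = t₂ := by
  by_contra hne
  rcases lt_or_gt_of_ne hne with h' | h'
  · exact absurd h (ne_of_lt (g.sg_mono u h'))
  · exact absurd h.symm (ne_of_lt (g.sg_mono u h'))

/-- for `0 < t < 1`, `sg u t` lies strictly inside the block `(rgl u / 2, rgr u / 2)`. -/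
lemma sg_bounds (u : g.V) {t : ℝ} (h0 : 0 < t) (h1 : t < 1) :
    g.rgl u / 2 < g.sg u t ∧ g.sg u t < g.rgr u / 2 := by
  have h2 := g.rg2 u
  have hqp := g.hq_pos u
  constructor
  · have : g.rgl u / 2 < g.hh u := by unfold hh; linarith
    have : g.hh u ≤ g.sg u t := by unfold sg; nlinarith
    unfold hh at *; unfold sg at *; nlinarith
  · unfold sg hh hq; nlinarith

/-- arguments fed to `sg` are in `(0,1)`: endpoints and region data -/
lemma arg_lr (w : g.V) : 0 < g.l w ∧ g.l w < 1 ∧ 0 < g.r w ∧ g.r w < 1 := by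
  obtain ⟨h1, h2, h3, h4, h5⟩ := g.bnd w
  refine ⟨h1, by linarith, by linarith, by linarith⟩

lemma arg_pL (v : g.V) : (g.rgl v + g.rgr v)/2 < g.pL v ∧ g.pL v < g.rgr v := by
  have := g.rg2 v; unfold pL; constructor <;> linarith

lemma arg_pL' (v : g.V) : 0 < g.pL v ∧ g.pL v < 1/2 := by
  obtain ⟨h1, h2, h3, h4, h5⟩ := g.bnd v
  unfold pL; constructor <;> linarith

lemma arg_sv (v : g.V) {c : ℝ} (hc : 0 ≤ c) (hc' : c ≤ 1) :
    1/2 < g.sv v + g.dv v * c ∧ g.sv v + g.dv v * c < 1 := by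
  obtain ⟨h1, h2, h3, h4, h5⟩ := g.bnd v
  have hd : 0 < g.dv v := by unfold dv; linarith
  unfold sv dv; constructor <;> nlinarith

/-- the P-`r` coordinate and region-coordinates in slot form -/
lemma slot_mem (v : g.V) {c : ℝ} (hc : 0 < c) (hc' : c < 1) :
    g.sv v < g.sv v + g.dv v * c ∧ g.sv v + g.dv v * c < 1/2 + g.rgr v / 2 := by
  have h2 := g.rg2 v
  have hd : 0 < g.dv v := by unfold dv; linarith
  unfold sv dv; constructor <;> nlinarith

/-- slots of distinct `v` are disjoint (closed form): -/
lemma slot_disj {v w : g.V} (h : v ≠ w) :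
    1/2 + g.rgr v / 2 < g.sv w ∨ 1/2 + g.rgr w / 2 < g.sv v := by
  rcases g.rg_disj v w h with h' | h'
  · left; unfold sv; linarith
  · right; unfold sv; linarith

/-- block (u-copy) endpoints: everything mapped by `sg u` from `(0,1)`
    lies strictly inside `(rgl u/2, rgr u/2)`; `inl`-endpoints avoid that block. -/
lemma l_avoid (x u : g.V) : g.l x / 2 < g.rgl u / 2 ∨ g.rgr u / 2 < g.l x / 2 := by
  rcases g.l_empty x u with h | h
  · left; linarith
  · right; linarith

lemma r_avoid (x u : g.V) : g.r x / 2 < g.rgl u / 2 ∨ g.rgr u / 2 < g.r x / 2 := by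
  rcases g.r_empty x u with h | h
  · left; linarith
  · right; linarith

lemma block_disj {u u' : g.V} (h : u ≠ u') : g.rgr u / 2 < g.rgl u' / 2 ∨ g.rgr u' / 2 < g.rgl u / 2 := by
  rcases g.rg_disj u u' h with h' | h'
  · left; linarith
  · right; linarith

/-- membership of block points -/
def BP (u : g.V) (y : ℝ) : Prop := ∃ t, 0 < t ∧ t < 1 ∧ y = g.sg u t

lemma bp_mem {u : g.V} {y : ℝ} (h : g.BP u y) :
    g.rgl u / 2 < y ∧ y < g.rgr u / 2 := by
  obtain ⟨t, h0, h1, rfl⟩ := h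
  exact g.sg_bounds u h0 h1

lemma bp_mem3 {u : g.V} {y : ℝ} (h : g.BP u y) : (g.rgl u + g.rgr u) / 4 < y := by
  obtain ⟨t, h0, h1, rfl⟩ := h
  have := g.hq_pos u
  unfold sg hh hq at *
  nlinarith

lemma bp_cl_S (u w : g.V) : g.BP u (g.cl (Sum.inr (Sum.inl (u, w)))) := by
  obtain ⟨h1, h2, h3, h4⟩ := g.arg_lr w
  exact ⟨g.l w, h1, h2, rfl⟩

lemma bp_cr_S (u w : g.V) : g.BP u (g.cr (Sum.inr (Sum.inl (u, w)))) := by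
  obtain ⟨h1, h2, h3, h4⟩ := g.arg_lr w
  exact ⟨g.r w, h3, h4, rfl⟩

lemma bp_cl_P (u v : g.V) : g.BP u (g.cl (Sum.inr (Sum.inr (u, v)))) := by
  obtain ⟨h1, h2⟩ := g.arg_pL' v
  exact ⟨g.pL v, h1, by linarith, rfl⟩

lemma bp_cr_P (u v : g.V) : g.BP u (g.cr (Sum.inr (Sum.inr (u, v)))) := by
  obtain ⟨h1, h2⟩ := g.arg_sv v (c := 1/2) (by norm_num) (by norm_num)
  refine ⟨g.sv v + g.dv v * (1/2), by linarith, by linarith, ?_⟩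
  show g.sg u (g.sv v + g.dv v / 2) = g.sg u (g.sv v + g.dv v * (1/2))
  ring_nf

lemma bp_crgl_S (u w : g.V) : g.BP u (g.crgl (Sum.inr (Sum.inl (u, w)))) := by
  obtain ⟨h1, h2, h3, h4, h5⟩ := g.bnd w
  exact ⟨g.rgl w, by linarith, by linarith, rfl⟩

lemma bp_crgr_S (u w : g.V) : g.BP u (g.crgr (Sum.inr (Sum.inl (u, w)))) := by
  obtain ⟨h1, h2, h3, h4, h5⟩ := g.bnd w
  exact ⟨(g.rgl w + g.rgr w)/2, by linarith, by linarith, rfl⟩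

lemma bp_crgl_P (u v : g.V) : g.BP u (g.crgl (Sum.inr (Sum.inr (u, v)))) := by
  obtain ⟨h1, h2⟩ := g.arg_sv v (c := 1/8) (by norm_num) (by norm_num)
  refine ⟨g.sv v + g.dv v * (1/8), by linarith, by linarith, ?_⟩
  show g.sg u (g.sv v + g.dv v / 8) = g.sg u (g.sv v + g.dv v * (1/8))
  ring_nf

lemma bp_crgr_P (u v : g.V) : g.BP u (g.crgr (Sum.inr (Sum.inr (u, v)))) := by
  obtain ⟨h1, h2⟩ := g.arg_sv v (c := 1/4) (by norm_num) (by norm_num)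
  refine ⟨g.sv v + g.dv v * (1/4), by linarith, by linarith, ?_⟩
  show g.sg u (g.sv v + g.dv v / 4) = g.sg u (g.sv v + g.dv v * (1/4))
  ring_nf

/-- any endpoint (l or r) of any composed vertex in block `u` is a block point;
    `inl` endpoints avoid every closed block. -/

lemma c_l_pos : ∀ x : CV g, 0 < g.cl x := by
  rintro (w | ⟨u, w⟩ | ⟨u, v⟩)
  · have := g.l_pos w; simpa [cl] using by linarith
  · have h := g.bp_mem (g.bp_cl_S u w)
    have := (g.bnd u).1; have := (g.bnd u).2.1
    linarith [h.1]
  · have h := g.bp_mem (g.bp_cl_P u v)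
    have := (g.bnd u).1; have := (g.bnd u).2.1
    linarith [h.1]

lemma c_r_half : ∀ x : CV g, g.cr x < 1/2 := by
  rintro (w | ⟨u, w⟩ | ⟨u, v⟩)
  · have := g.r_half w; simp only [cr]; linarith
  · have h := g.bp_mem (g.bp_cr_S u w)
    have := (g.bnd u).2.2.2; linarith [h.2]
  · have h := g.bp_mem (g.bp_cr_P u v)
    have := (g.bnd u).2.2.2; linarith [h.2]

lemma c_rg1 : ∀ x : CV g, g.cl x < g.crgl x := by
  rintro (w | ⟨u, w⟩ | ⟨u, v⟩)
  · have := g.rg1 w; simp only [cl, crgl]; linarith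
  · exact g.sg_mono u (g.rg1 w)
  · refine g.sg_mono u ?_
    have h1 := (g.arg_pL' v).2
    have h2 := (g.arg_sv v (c := 1/8) (by norm_num) (by norm_num)).1
    show g.pL v < g.sv v + g.dv v / 8
    linarith

lemma c_rg2 : ∀ x : CV g, g.crgl x < g.crgr x := by
  rintro (w | ⟨u, w⟩ | ⟨u, v⟩)
  · have := g.rg2 w; simp only [crgl, crgr]; linarith
  · refine g.sg_mono u ?_; have := g.rg2 w; linarith
  · refine g.sg_mono u ?_
    have h2 := g.rg2 v
    show g.sv v + g.dv v / 8 < g.sv v + g.dv v / 4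
    unfold dv; linarith

lemma c_rg3 : ∀ x : CV g, g.crgr x < g.cr x := by
  rintro (w | ⟨u, w⟩ | ⟨u, v⟩)
  · have h := g.bnd w; simp only [crgr, cr]; obtain ⟨_,_,h3,h4,_⟩ := h; linarith
  · refine g.sg_mono u ?_; have := g.rg2 w; have := g.rg3 w; linarith
  · refine g.sg_mono u ?_
    have h2 := g.rg2 v
    show g.sv v + g.dv v / 4 < g.sv v + g.dv v / 2
    unfold dv; linarith

/-- an `inl` endpoint never equals a block point, two block points of different
blocks never coincide -/
lemma inl_l_ne_bp {x u : g.V} {y : ℝ} (h : g.BP u y) : g.l x / 2 ≠ y := by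
  have hm := g.bp_mem h
  rcases g.l_avoid x u with h' | h' <;> intro he <;> rw [he] at h' <;> linarith [hm.1, hm.2]

lemma inl_r_ne_bp {x u : g.V} {y : ℝ} (h : g.BP u y) : g.r x / 2 ≠ y := by
  have hm := g.bp_mem h
  rcases g.r_avoid x u with h' | h' <;> intro he <;> rw [he] at h' <;> linarith [hm.1, hm.2]

lemma bp_ne_bp {u u' : g.V} (h : u ≠ u') {y y' : ℝ} (hy : g.BP u y) (hy' : g.BP u' y') :
    y ≠ y' := by
  have hm := g.bp_mem hy
  have hm' := g.bp_mem hy'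
  rcases g.block_disj h with h' | h' <;> intro he <;> rw [he] at hm <;> linarith [hm.1, hm.2, hm'.1, hm'.2]

lemma sg_ne {u : g.V} {t t' : ℝ} (h : t ≠ t') : g.sg u t ≠ g.sg u t' :=
  fun he => h (g.sg_inj u he)

lemma pL_ne {v v' : g.V} (h : v ≠ v') : g.pL v ≠ g.pL v' := by
  have h1 := g.arg_pL v
  have h2 := g.arg_pL v'
  have h3 := g.rg2 v
  have h4 := g.rg2 v'
  rcases g.rg_disj v v' h with h' | h' <;> intro he <;> rw [he] at h1 <;> linarith [h1.1, h1.2, h2.1, h2.2]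

lemma rP_ne {v v' : g.V} (h : v ≠ v') : g.sv v + g.dv v / 2 ≠ g.sv v' + g.dv v' / 2 := by
  have h1 := g.slot_mem v (c := 1/2) (by norm_num) (by norm_num)
  have h2 := g.slot_mem v' (c := 1/2) (by norm_num) (by norm_num)
  have e1 : g.sv v + g.dv v * (1/2) = g.sv v + g.dv v / 2 := by ring
  have e2 : g.sv v' + g.dv v' * (1/2) = g.sv v' + g.dv v' / 2 := by ring
  rw [e1] at h1; rw [e2] at h2
  rcases g.slot_disj h with h' | h' <;> intro he <;>
    [ (rw [he] at h1; linarith [h1.1, h1.2, h2.1, h2.2]);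
      (rw [← he] at h2; linarith [h1.1, h1.2, h2.1, h2.2]) ]

lemma l_lt_half (w : g.V) : g.l w < 1/2 := by
  obtain ⟨h1,h2,h3,h4,h5⟩ := g.bnd w; linarith

lemma sv_gt_half (v : g.V) : 1/2 < g.sv v := by
  have := (g.bnd v).1; have := (g.bnd v).2.1; unfold sv; linarith

lemma dv_pos (v : g.V) : 0 < g.dv v := by
  have := g.rg2 v; unfold dv; linarith

lemma c_l_inj : Function.Injective g.cl := by
  rintro (w | ⟨u, w⟩ | ⟨u, v⟩) (w' | ⟨u', w'⟩ | ⟨u', v'⟩) h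
  · have h' : g.l w / 2 = g.l w' / 2 := h
    have := g.l_inj (by linarith : g.l w = g.l w')
    rw [this]
  · exact absurd h (g.inl_l_ne_bp (g.bp_cl_S u' w'))
  · exact absurd h (g.inl_l_ne_bp (g.bp_cl_P u' v'))
  · exact absurd h.symm (g.inl_l_ne_bp (g.bp_cl_S u w))
  · rcases eq_or_ne u u' with rfl | hne
    · have := g.l_inj (g.sg_inj u (h : g.sg u (g.l w) = g.sg u (g.l w')))
      rw [this]
    · exact absurd h (g.bp_ne_bp hne (g.bp_cl_S u w) (g.bp_cl_S u' w'))
  · rcases eq_or_ne u u' with rfl | hne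
    · exfalso
      have he := g.sg_inj u (h : g.sg u (g.l w) = g.sg u (g.pL v'))
      have h1 := g.arg_pL v'
      rcases g.l_empty w v' with h' | h' <;> rw [he] at h' <;> linarith [h1.1, h1.2]
    · exact absurd h (g.bp_ne_bp hne (g.bp_cl_S u w) (g.bp_cl_P u' v'))
  · exact absurd h.symm (g.inl_l_ne_bp (g.bp_cl_P u v))
  · rcases eq_or_ne u' u with rfl | hne
    · exfalso
      have he := g.sg_inj u' (h : g.sg u' (g.pL v) = g.sg u' (g.l w'))
      have h1 := g.arg_pL v
      rcases g.l_empty w' v with h' | h' <;> rw [← he] at h' <;> linarith [h1.1, h1.2]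
    · exact absurd h.symm (g.bp_ne_bp hne (g.bp_cl_S u' w') (g.bp_cl_P u v))
  · rcases eq_or_ne u u' with rfl | hne
    · have := g.pL_ne (v := v) (v' := v')
      rcases eq_or_ne v v' with rfl | hvv
      · rfl
      · exact absurd (g.sg_inj u (h : g.sg u (g.pL v) = g.sg u (g.pL v'))) (this hvv)
    · exact absurd h (g.bp_ne_bp hne (g.bp_cl_P u v) (g.bp_cl_P u' v'))

lemma c_r_inj : Function.Injective g.cr := by
  rintro (w | ⟨u, w⟩ | ⟨u, v⟩) (w' | ⟨u', w'⟩ | ⟨u', v'⟩) h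
  · have h' : g.r w / 2 = g.r w' / 2 := h
    have := g.r_inj (by linarith : g.r w = g.r w')
    rw [this]
  · exact absurd h (g.inl_r_ne_bp (g.bp_cr_S u' w'))
  · exact absurd h (g.inl_r_ne_bp (g.bp_cr_P u' v'))
  · exact absurd h.symm (g.inl_r_ne_bp (g.bp_cr_S u w))
  · rcases eq_or_ne u u' with rfl | hne
    · have := g.r_inj (g.sg_inj u (h : g.sg u (g.r w) = g.sg u (g.r w')))
      rw [this]
    · exact absurd h (g.bp_ne_bp hne (g.bp_cr_S u w) (g.bp_cr_S u' w'))
  · rcases eq_or_ne u u' with rfl | hne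
    · exfalso
      have he := g.sg_inj u (h : g.sg u (g.r w) = g.sg u (g.sv v' + g.dv v' / 2))
      have h1 := g.r_half w
      have h2 := g.sv_gt_half v'
      have h3 := g.dv_pos v'
      rw [he] at h1; linarith
    · exact absurd h (g.bp_ne_bp hne (g.bp_cr_S u w) (g.bp_cr_P u' v'))
  · exact absurd h.symm (g.inl_r_ne_bp (g.bp_cr_P u v))
  · rcases eq_or_ne u' u with rfl | hne
    · exfalso
      have he := g.sg_inj u' (h : g.sg u' (g.sv v + g.dv v / 2) = g.sg u' (g.r w'))
      have h1 := g.r_half w'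
      have h2 := g.sv_gt_half v
      have h3 := g.dv_pos v
      rw [← he] at h1; linarith
    · exact absurd h.symm (g.bp_ne_bp hne (g.bp_cr_S u' w') (g.bp_cr_P u v))
  · rcases eq_or_ne u u' with rfl | hne
    · rcases eq_or_ne v v' with rfl | hvv
      · rfl
      · exact absurd (g.sg_inj u (h : g.sg u (g.sv v + g.dv v / 2) = g.sg u (g.sv v' + g.dv v' / 2))) (g.rP_ne hvv)
    · exact absurd h (g.bp_ne_bp hne (g.bp_cr_P u v) (g.bp_cr_P u' v'))

lemma c_lr_ne : ∀ x y : CV g, g.cl x ≠ g.cr y := by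
  rintro (w | ⟨u, w⟩ | ⟨u, v⟩) (w' | ⟨u', w'⟩ | ⟨u', v'⟩)
  · intro h
    have h' : g.l w / 2 = g.r w' / 2 := h
    exact g.lr_ne w w' (by linarith)
  · exact g.inl_l_ne_bp (g.bp_cr_S u' w')
  · exact g.inl_l_ne_bp (g.bp_cr_P u' v')
  · exact fun h => g.inl_r_ne_bp (g.bp_cl_S u w) h.symm
  · rcases eq_or_ne u u' with rfl | hne
    · intro h
      exact g.lr_ne w w' (g.sg_inj u h)
    · exact g.bp_ne_bp hne (g.bp_cl_S u w) (g.bp_cr_S u' w')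
  · rcases eq_or_ne u u' with rfl | hne
    · intro h
      have he := g.sg_inj u (h : g.sg u (g.l w) = g.sg u (g.sv v' + g.dv v' / 2))
      have h1 := g.l_lt_half w
      have h2 := g.sv_gt_half v'
      have h3 := g.dv_pos v'
      rw [he] at h1; linarith
    · exact g.bp_ne_bp hne (g.bp_cl_S u w) (g.bp_cr_P u' v')
  · exact fun h => g.inl_r_ne_bp (g.bp_cl_P u v) h.symm
  · rcases eq_or_ne u u' with rfl | hne
    · intro h
      have he := g.sg_inj u (h : g.sg u (g.pL v) = g.sg u (g.r w'))
      have h1 := g.arg_pL v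
      rcases g.r_empty w' v with h' | h' <;> rw [← he] at h' <;> linarith [h1.1, h1.2]
    · exact g.bp_ne_bp hne (g.bp_cl_P u v) (g.bp_cr_S u' w')
  · rcases eq_or_ne u u' with rfl | hne
    · intro h
      have he := g.sg_inj u (h : g.sg u (g.pL v) = g.sg u (g.sv v' + g.dv v' / 2))
      have h1 := (g.arg_pL' v).2
      have h2 := g.sv_gt_half v'
      have h3 := g.dv_pos v'
      rw [he] at h1; linarith
    · exact g.bp_ne_bp hne (g.bp_cl_P u v) (g.bp_cr_P u' v')

lemma sv_dv (v : g.V) : g.sv v + g.dv v = 1/2 + g.rgr v / 2 := by unfold sv dv; ring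

lemma sg_splits (u : g.V) {s t₁ t₂ : ℝ} (h : s < t₁ ∨ t₂ < s) :
    g.sg u s < g.sg u t₁ ∨ g.sg u t₂ < g.sg u s := by
  rcases h with h | h
  · exact Or.inl (g.sg_mono u h)
  · exact Or.inr (g.sg_mono u h)

lemma bp_vs_bp {u u' : g.V} (hne : u ≠ u') {e p q : ℝ}
    (he : g.BP u e) (hp : g.BP u' p) (hq : g.BP u' q) : e < p ∨ q < e := by
  have h1 := g.bp_mem he
  have h2 := g.bp_mem hp
  have h3 := g.bp_mem hq
  rcases g.block_disj hne with h | h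
  · left; linarith [h1.2, h2.1]
  · right; linarith [h1.1, h3.2]

lemma off_vs_bp {u : g.V} {e p q : ℝ} (he : e < g.rgl u / 2 ∨ g.rgr u / 2 < e)
    (hp : g.BP u p) (hq : g.BP u q) : e < p ∨ q < e := by
  have h2 := g.bp_mem hp
  have h3 := g.bp_mem hq
  rcases he with h | h
  · left; linarith [h2.1]
  · right; linarith [h3.2]

/-- block point vs the region of an `inl` node -/
lemma bp_vs_inl {u w : g.V} {e : ℝ} (he : g.BP u e) :
    e < g.rgl w / 2 ∨ (g.rgl w + g.rgr w) / 4 < e := by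
  rcases eq_or_ne u w with rfl | hne
  · exact Or.inr (g.bp_mem3 he)
  · have h1 := g.bp_mem he
    have := g.rg2 w
    rcases g.block_disj hne with h | h
    · left; linarith [h1.2]
    · right; linarith [h1.1]

lemma inlreg_vs_bp {w u' : g.V} {p q : ℝ} (hp : g.BP u' p) (hq : g.BP u' q) :
    (g.rgl w + g.rgr w) / 4 < p ∨ q < g.rgl w / 2 := by
  rcases eq_or_ne u' w with rfl | hne
  · exact Or.inl (g.bp_mem3 hp)
  · have h1 := g.bp_mem hp
    have h2 := g.bp_mem hq
    have := g.rg2 w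
    rcases g.block_disj hne with h | h
    · right; linarith [h2.2]
    · left; linarith [h1.1]

lemma bpreg_vs_bpreg {u u' : g.V} (hne : u ≠ u') {p q p' q' : ℝ}
    (hp : g.BP u p) (hq : g.BP u q) (hp' : g.BP u' p') (hq' : g.BP u' q') :
    q < p' ∨ q' < p := by
  have h1 := g.bp_mem hp
  have h2 := g.bp_mem hq
  have h3 := g.bp_mem hp'
  have h4 := g.bp_mem hq'
  rcases g.block_disj hne with h | h
  · left; linarith
  · right; linarith

lemma off_vs_inlreg {w : g.V} {e : ℝ} (he : e < g.rgl w / 2 ∨ g.rgr w / 2 < e) :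
    e < g.rgl w / 2 ∨ (g.rgl w + g.rgr w) / 4 < e := by
  have := g.rg2 w
  rcases he with h | h
  · exact Or.inl h
  · right; linarith

lemma c_rg_disj : ∀ x y : CV g, x ≠ y → g.crgr x < g.crgl y ∨ g.crgr y < g.crgl x := by
  rintro (w | ⟨u, w⟩ | ⟨u, v⟩) (w' | ⟨u', w'⟩ | ⟨u', v'⟩) hne
  · have hww : w ≠ w' := by rintro rfl; exact hne rfl
    have b1 := g.bnd w
    have b2 := g.bnd w'
    rcases g.rg_disj w w' hww with h | h
    · exact Or.inl (by show (g.rgl w + g.rgr w) / 4 < g.rgl w' / 2; linarith [b1.2.1, b1.2.2.1, b2.2.1])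
    · exact Or.inr (by show (g.rgl w' + g.rgr w') / 4 < g.rgl w / 2; linarith [b1.2.1, b2.2.1, b2.2.2.1])
  · exact g.inlreg_vs_bp (g.bp_crgl_S u' w') (g.bp_crgr_S u' w')
  · exact g.inlreg_vs_bp (g.bp_crgl_P u' v') (g.bp_crgr_P u' v')
  · exact (g.inlreg_vs_bp (g.bp_crgl_S u w) (g.bp_crgr_S u w)).symm
  · rcases eq_or_ne u u' with rfl | huu
    · have hxx : w ≠ w' := by rintro rfl; exact hne rfl
      rcases g.rg_disj w w' hxx with h | h
      · exact Or.inl (g.sg_mono u (by have := g.rg2 w; linarith))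
      · exact Or.inr (g.sg_mono u (by have := g.rg2 w'; linarith))
    · exact g.bpreg_vs_bpreg huu (g.bp_crgl_S u w) (g.bp_crgr_S u w)
        (g.bp_crgl_S u' w') (g.bp_crgr_S u' w')
  · rcases eq_or_ne u u' with rfl | huu
    · refine Or.inl (g.sg_mono u ?_)
      have b := g.bnd w
      have h1 := g.sv_gt_half v'
      have h2 := g.dv_pos v'
      show (g.rgl w + g.rgr w) / 2 < g.sv v' + g.dv v' / 8
      linarith [b.2.1, b.2.2.1, b.2.2.2.1, b.2.2.2.2]
    · exact g.bpreg_vs_bpreg huu (g.bp_crgl_S u w) (g.bp_crgr_S u w)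
        (g.bp_crgl_P u' v') (g.bp_crgr_P u' v')
  · exact (g.inlreg_vs_bp (g.bp_crgl_P u v) (g.bp_crgr_P u v)).symm
  · rcases eq_or_ne u u' with rfl | huu
    · refine Or.inr (g.sg_mono u ?_)
      have b := g.bnd w'
      have h1 := g.sv_gt_half v
      have h2 := g.dv_pos v
      show (g.rgl w' + g.rgr w') / 2 < g.sv v + g.dv v / 8
      linarith [b.2.1, b.2.2.1, b.2.2.2.1, b.2.2.2.2]
    · exact g.bpreg_vs_bpreg huu (g.bp_crgl_P u v) (g.bp_crgr_P u v)
        (g.bp_crgl_S u' w') (g.bp_crgr_S u' w')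
  · rcases eq_or_ne u u' with rfl | huu
    · have hvv : v ≠ v' := by rintro rfl; exact hne rfl
      have e1 := g.sv_dv v
      have e2 := g.sv_dv v'
      have d1 := g.dv_pos v
      have d2 := g.dv_pos v'
      rcases g.slot_disj hvv with h | h
      · exact Or.inl (g.sg_mono u (by linarith))
      · exact Or.inr (g.sg_mono u (by linarith))
    · exact g.bpreg_vs_bpreg huu (g.bp_crgl_P u v) (g.bp_crgr_P u v)
        (g.bp_crgl_P u' v') (g.bp_crgr_P u' v')

lemma c_l_empty : ∀ x y : CV g, g.cl x < g.crgl y ∨ g.crgr y < g.cl x := by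
  rintro (w | ⟨u, w⟩ | ⟨u, v⟩) (w' | ⟨u', w'⟩ | ⟨u', v'⟩)
  · exact g.off_vs_inlreg (g.l_avoid w w')
  · exact g.off_vs_bp (g.l_avoid w u') (g.bp_crgl_S u' w') (g.bp_crgr_S u' w')
  · exact g.off_vs_bp (g.l_avoid w u') (g.bp_crgl_P u' v') (g.bp_crgr_P u' v')
  · exact g.bp_vs_inl (g.bp_cl_S u w)
  · rcases eq_or_ne u u' with rfl | huu
    · refine g.sg_splits u ?_
      rcases g.l_empty w w' with h | h
      · exact Or.inl h
      · exact Or.inr (by have := g.rg2 w'; linarith)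
    · exact g.bp_vs_bp huu (g.bp_cl_S u w) (g.bp_crgl_S u' w') (g.bp_crgr_S u' w')
  · rcases eq_or_ne u u' with rfl | huu
    · refine Or.inl (g.sg_mono u ?_)
      have h1 := g.sv_gt_half v'
      have h2 := g.dv_pos v'
      have h3 := g.l_lt_half w
      show g.l w < g.sv v' + g.dv v' / 8
      linarith
    · exact g.bp_vs_bp huu (g.bp_cl_S u w) (g.bp_crgl_P u' v') (g.bp_crgr_P u' v')
  · exact g.bp_vs_inl (g.bp_cl_P u v)
  · rcases eq_or_ne u u' with rfl | huu
    · refine g.sg_splits u ?_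
      have hp := g.arg_pL v
      rcases eq_or_ne v w' with rfl | hvw
      · exact Or.inr hp.1
      · rcases g.rg_disj v w' hvw with h | h
        · exact Or.inl (by linarith [hp.2])
        · exact Or.inr (by have := g.rg2 w'; have := g.rg1 v; linarith [hp.1])
    · exact g.bp_vs_bp huu (g.bp_cl_P u v) (g.bp_crgl_S u' w') (g.bp_crgr_S u' w')
  · rcases eq_or_ne u u' with rfl | huu
    · refine Or.inl (g.sg_mono u ?_)
      have h1 := g.sv_gt_half v'
      have h2 := g.dv_pos v'
      have h3 := (g.arg_pL' v).2
      show g.pL v < g.sv v' + g.dv v' / 8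
      linarith
    · exact g.bp_vs_bp huu (g.bp_cl_P u v) (g.bp_crgl_P u' v') (g.bp_crgr_P u' v')

lemma c_r_empty : ∀ x y : CV g, g.cr x < g.crgl y ∨ g.crgr y < g.cr x := by
  rintro (w | ⟨u, w⟩ | ⟨u, v⟩) (w' | ⟨u', w'⟩ | ⟨u', v'⟩)
  · exact g.off_vs_inlreg (g.r_avoid w w')
  · exact g.off_vs_bp (g.r_avoid w u') (g.bp_crgl_S u' w') (g.bp_crgr_S u' w')
  · exact g.off_vs_bp (g.r_avoid w u') (g.bp_crgl_P u' v') (g.bp_crgr_P u' v')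
  · exact g.bp_vs_inl (g.bp_cr_S u w)
  · rcases eq_or_ne u u' with rfl | huu
    · refine g.sg_splits u ?_
      rcases g.r_empty w w' with h | h
      · exact Or.inl h
      · exact Or.inr (by have := g.rg2 w'; linarith)
    · exact g.bp_vs_bp huu (g.bp_cr_S u w) (g.bp_crgl_S u' w') (g.bp_crgr_S u' w')
  · rcases eq_or_ne u u' with rfl | huu
    · refine Or.inl (g.sg_mono u ?_)
      have h1 := g.sv_gt_half v'
      have h2 := g.dv_pos v'
      have h3 := g.r_half w
      show g.r w < g.sv v' + g.dv v' / 8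
      linarith
    · exact g.bp_vs_bp huu (g.bp_cr_S u w) (g.bp_crgl_P u' v') (g.bp_crgr_P u' v')
  · exact g.bp_vs_inl (g.bp_cr_P u v)
  · rcases eq_or_ne u u' with rfl | huu
    · refine Or.inr (g.sg_mono u ?_)
      have h1 := g.sv_gt_half v
      have h2 := g.dv_pos v
      have b := g.bnd w'
      show (g.rgl w' + g.rgr w') / 2 < g.sv v + g.dv v / 2
      linarith [b.2.1, b.2.2.1, b.2.2.2.1, b.2.2.2.2]
    · exact g.bp_vs_bp huu (g.bp_cr_P u v) (g.bp_crgl_S u' w') (g.bp_crgr_S u' w')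
  · rcases eq_or_ne u u' with rfl | huu
    · rcases eq_or_ne v v' with rfl | hvv
      · exact Or.inr (g.sg_mono u (by have := g.dv_pos v; linarith))
      · have e1 := g.sv_dv v
        have e2 := g.sv_dv v'
        have d1 := g.dv_pos v
        have d2 := g.dv_pos v'
        rcases g.slot_disj hvv with h | h
        · exact Or.inl (g.sg_mono u (by linarith))
        · exact Or.inr (g.sg_mono u (by linarith))
    · exact g.bp_vs_bp huu (g.bp_cr_P u v) (g.bp_crgl_P u' v') (g.bp_crgr_P u' v')

/-! chains in the composed gadget -/

lemma chain_inl {z : CV g} {w : g.V} (h : ChainOf g.cpar z (Sum.inl w)) :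
    ∃ w₀, z = Sum.inl w₀ ∧ ChainOf g.par w₀ w := by
  rcases h with rfl | h
  · exact ⟨w, rfl, Or.inl rfl⟩
  · obtain ⟨w₀, rfl, h₀⟩ := g.anc_desc h
    exact ⟨w₀, rfl, Or.inr h₀⟩

lemma chain_S {z : CV g} {u w : g.V} (h : ChainOf g.cpar z (Sum.inr (Sum.inl (u, w)))) :
    (∃ w₀, z = Sum.inr (Sum.inl (u, w₀)) ∧ ChainOf g.par w₀ w) ∨
    (∃ u₀, z = Sum.inl u₀ ∧ ChainOf g.par u₀ u) := by
  rcases h with rfl | h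
  · exact Or.inl ⟨w, rfl, Or.inl rfl⟩
  · rcases g.anc_desc h with ⟨w₀, rfl, h₀⟩ | ⟨u₀, rfl, h₀⟩
    · exact Or.inl ⟨w₀, rfl, Or.inr h₀⟩
    · exact Or.inr ⟨u₀, rfl, h₀⟩

lemma chain_P {z : CV g} {u v : g.V} (h : ChainOf g.cpar z (Sum.inr (Sum.inr (u, v)))) :
    z = Sum.inr (Sum.inr (u, v)) ∨ ChainOf g.cpar z (Sum.inr (Sum.inl (u, v))) := by
  rcases h with rfl | h
  · exact Or.inl rfl
  · rcases g.anc_desc h with h₀ | h₀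
    · exact Or.inr (Or.inl h₀)
    · exact Or.inr (Or.inr (g.desc_ancS h₀))

lemma chainF {a b : g.V} (h : ChainOf g.par a b) :
    ChainOf g.cpar (Sum.inl a) (Sum.inl b) := by
  rcases h with rfl | h
  · exact Or.inl rfl
  · exact Or.inr (g.ancF h)

lemma chainS (u : g.V) {a b : g.V} (h : ChainOf g.par a b) :
    ChainOf g.cpar (Sum.inr (Sum.inl (u, a))) (Sum.inr (Sum.inl (u, b))) := by
  rcases h with rfl | h
  · exact Or.inl rfl
  · exact Or.inr (g.ancS u h)

/-! overlap helpers -/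

lemma overlap_confined {a b c d lo hi : ℝ} (hc : lo < c ∧ c < hi) (hd : lo < d ∧ d < hi)
    (ha : a < lo ∨ hi < a) (hb : b < lo ∨ hi < b) : ¬ IntervalOverlap a b c d := by
  rintro (⟨h1, h2, h3⟩ | ⟨h1, h2, h3⟩) <;> rcases ha with ha | ha <;> rcases hb with hb | hb <;>
    linarith [hc.1, hc.2, hd.1, hd.2]

lemma sg_lt_iff (u : g.V) {t t' : ℝ} : g.sg u t < g.sg u t' ↔ t < t' := by
  constructor
  · intro h
    by_contra h'
    push_neg at h'
    rcases eq_or_lt_of_le h' with rfl | h''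
    · exact lt_irrefl _ h
    · exact absurd (g.sg_mono u h'') (by linarith)
  · exact g.sg_mono u

lemma overlap_sg_iff (u : g.V) {a b c d : ℝ} :
    IntervalOverlap (g.sg u a) (g.sg u b) (g.sg u c) (g.sg u d) ↔ IntervalOverlap a b c d := by
  unfold IntervalOverlap
  simp only [g.sg_lt_iff u]

lemma overlap_half_iff {a b c d : ℝ} :
    IntervalOverlap (a/2) (b/2) (c/2) (d/2) ↔ IntervalOverlap a b c d := by
  unfold IntervalOverlap
  constructor <;> rintro (⟨h1,h2,h3⟩ | ⟨h1,h2,h3⟩) <;> [left; right; left; right] <;>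
    refine ⟨by linarith, by linarith, by linarith⟩

/-- interval endpoint of an `inl` vertex avoids block `u` -/
lemma inl_avoid_cl (x u : g.V) : g.cl (Sum.inl x) < g.rgl u / 2 ∨ g.rgr u / 2 < g.cl (Sum.inl x) :=
  g.l_avoid x u

lemma inl_avoid_cr (x u : g.V) : g.cr (Sum.inl x) < g.rgl u / 2 ∨ g.rgr u / 2 < g.cr (Sum.inl x) :=
  g.r_avoid x u

/-- no overlap between an `inl` vertex and a block-`u` vertex (S or P) -/
lemma no_cross_overlap {x : g.V} {y : CV g} {u : g.V}
    (hyl : g.BP u (g.cl y)) (hyr : g.BP u (g.cr y)) :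
    ¬ IntervalOverlap (g.cl (Sum.inl x)) (g.cr (Sum.inl x)) (g.cl y) (g.cr y) :=
  overlap_confined (g.bp_mem hyl) (g.bp_mem hyr) (g.inl_avoid_cl x u) (g.inl_avoid_cr x u)

/-! G1 for the composed gadget -/

lemma c_g1 : ∀ ⦃z v : CV g⦄, Anc g.cpar z v → g.cl z < g.cl v := by
  intro z v h
  rcases v with w | ⟨u, w⟩ | ⟨u, v₀⟩
  · obtain ⟨w₀, rfl, h₀⟩ := g.anc_desc h
    have := g.g1 h₀
    show g.l w₀ / 2 < g.l w / 2
    linarith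
  · rcases g.anc_desc h with ⟨w₀, rfl, h₀⟩ | ⟨u₀, rfl, h₀⟩
    · exact g.sg_mono u (g.g1 h₀)
    · have h1 := g.chain_l h₀
      have h2 := (g.bp_mem (g.bp_cl_S u w)).1
      show g.l u₀ / 2 < g.cl (Sum.inr (Sum.inl (u, w)))
      linarith
  · have hPbp := g.bp_mem (g.bp_cl_P u v₀)
    rcases g.anc_desc h with rfl | hd
    · refine g.sg_mono u ?_
      have := g.chain_l (chainOf_refl g.par v₀)
      have hp := g.arg_pL v₀
      have := g.rg2 v₀
      show g.l v₀ < g.pL v₀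
      linarith [hp.1]
    · rcases hd with ⟨w₀, rfl, h₀⟩ | ⟨u₀, rfl, h₀⟩
      · refine g.sg_mono u ?_
        have h1 := g.chain_l (Or.inr h₀ : ChainOf g.par w₀ v₀)
        have hp := g.arg_pL v₀
        have := g.rg2 v₀
        show g.l w₀ < g.pL v₀
        linarith [hp.1]
      · have h1 := g.chain_l h₀
        show g.l u₀ / 2 < g.cl (Sum.inr (Sum.inr (u, v₀)))
        linarith [hPbp.1]

lemma c_chain_l : ∀ ⦃z v : CV g⦄, ChainOf g.cpar z v → g.cl z < g.crgl v := by
  intro z v h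
  rcases v with w | ⟨u, w⟩ | ⟨u, v₀⟩
  · obtain ⟨w₀, rfl, h₀⟩ := g.chain_inl h
    have := g.chain_l h₀
    show g.l w₀ / 2 < g.rgl w / 2
    linarith
  · rcases g.chain_S h with ⟨w₀, rfl, h₀⟩ | ⟨u₀, rfl, h₀⟩
    · exact g.sg_mono u (g.chain_l h₀)
    · have h1 := g.chain_l h₀
      have h2 := (g.bp_mem (g.bp_crgl_S u w)).1
      show g.l u₀ / 2 < g.crgl (Sum.inr (Sum.inl (u, w)))
      linarith
  · have hbp := g.bp_mem (g.bp_crgl_P u v₀)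
    rcases g.chain_P h with rfl | h₀
    · exact g.c_rg1 _
    · rcases g.chain_S h₀ with ⟨w₀, rfl, h₁⟩ | ⟨u₀, rfl, h₁⟩
      · refine g.sg_mono u ?_
        have h2 := g.l_lt_half w₀
        have h3 := g.sv_gt_half v₀
        have h4 := g.dv_pos v₀
        show g.l w₀ < g.sv v₀ + g.dv v₀ / 8
        linarith
      · have h2 := g.chain_l h₁
        show g.l u₀ / 2 < g.crgl (Sum.inr (Sum.inr (u, v₀)))
        linarith [hbp.1]

/-! pairs (chain overlap bound) for composed gadget -/

lemma c_pairs_S {u w : g.V} {z z' : CV g}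
    (hz : ChainOf g.cpar z (Sum.inr (Sum.inl (u, w))))
    (hz' : ChainOf g.cpar z' (Sum.inr (Sum.inl (u, w))))
    (ho : IntervalOverlap (g.cl z) (g.cr z) (g.cl z') (g.cr z')) :
    min (g.cr z) (g.cr z') < g.crgl (Sum.inr (Sum.inl (u, w))) := by
  have hbp := g.bp_mem (g.bp_crgl_S u w)
  rcases g.chain_S hz with ⟨a, rfl, ha⟩ | ⟨a, rfl, ha⟩ <;>
    rcases g.chain_S hz' with ⟨b, rfl, hb⟩ | ⟨b, rfl, hb⟩
  · -- both in the S copy: use copy pairs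
    have := g.pairs ha hb ((g.overlap_sg_iff u).1 ho)
    rw [min_lt_iff] at this
    rw [min_lt_iff]
    rcases this with h | h
    · exact Or.inl (g.sg_mono u h)
    · exact Or.inr (g.sg_mono u h)
  · exact absurd (intervalOverlap_symm ho)
      (g.no_cross_overlap (g.bp_cl_S u a) (g.bp_cr_S u a))
  · exact absurd ho (g.no_cross_overlap (g.bp_cl_S u b) (g.bp_cr_S u b))
  · -- both inl: copy pairs at u
    have := g.pairs ha hb (overlap_half_iff.1 ho)
    rw [min_lt_iff] at this
    rw [min_lt_iff]
    rcases this with h | h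
    · exact Or.inl (by show g.r a / 2 < _; linarith [hbp.1])
    · exact Or.inr (by show g.r b / 2 < _; linarith [hbp.1])

lemma c_pairs : ∀ ⦃v z z' : CV g⦄, ChainOf g.cpar z v → ChainOf g.cpar z' v →
    IntervalOverlap (g.cl z) (g.cr z) (g.cl z') (g.cr z') →
    min (g.cr z) (g.cr z') < g.crgl v := by
  intro v z z' hz hz' ho
  rcases v with w | ⟨u, w⟩ | ⟨u, v₀⟩
  · obtain ⟨a, rfl, ha⟩ := g.chain_inl hz
    obtain ⟨b, rfl, hb⟩ := g.chain_inl hz'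
    have := g.pairs ha hb (overlap_half_iff.1 ho)
    rw [min_lt_iff] at this
    rw [min_lt_iff]
    rcases this with h | h
    · exact Or.inl (by show g.r a / 2 < g.rgl w / 2; linarith)
    · exact Or.inr (by show g.r b / 2 < g.rgl w / 2; linarith)
  · exact g.c_pairs_S hz hz' ho
  · -- v is a P node
    have hmono : g.crgl (Sum.inr (Sum.inl (u, v₀))) < g.crgl (Sum.inr (Sum.inr (u, v₀))) := by
      refine g.sg_mono u ?_
      have h1 := (g.bnd v₀).2.1
      have h2 := (g.bnd v₀).1
      have h3 := (g.bnd v₀).2.2.1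
      have h4 := (g.bnd v₀).2.2.2.1
      have h5 := (g.bnd v₀).2.2.2.2
      have h6 := g.sv_gt_half v₀
      have h7 := g.dv_pos v₀
      show g.rgl v₀ < g.sv v₀ + g.dv v₀ / 8
      linarith
    have hScr : ∀ (a : g.V), g.cr (Sum.inr (Sum.inl (u, a))) < g.crgl (Sum.inr (Sum.inr (u, v₀))) := by
      intro a
      refine g.sg_mono u ?_
      have h2 := g.r_half a
      have h3 := g.sv_gt_half v₀
      have h4 := g.dv_pos v₀
      show g.r a < g.sv v₀ + g.dv v₀ / 8
      linarith
    rcases g.chain_P hz with rfl | hz₀ <;> rcases g.chain_P hz' with rfl | hz'₀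
    · exfalso
      rcases ho with ⟨h1, _, _⟩ | ⟨h1, _, _⟩ <;> exact lt_irrefl _ h1
    · -- z = P, z' in chain of S node
      rcases g.chain_S hz'₀ with ⟨a, rfl, _⟩ | ⟨a, rfl, _⟩
      · exact lt_of_le_of_lt (min_le_right _ _) (hScr a)
      · exact absurd (intervalOverlap_symm ho)
          (g.no_cross_overlap (g.bp_cl_P u v₀) (g.bp_cr_P u v₀))
    · rcases g.chain_S hz₀ with ⟨a, rfl, _⟩ | ⟨a, rfl, _⟩
      · exact lt_of_le_of_lt (min_le_left _ _) (hScr a)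
      · exact absurd ho (g.no_cross_overlap (g.bp_cl_P u v₀) (g.bp_cr_P u v₀))
    · exact lt_trans (g.c_pairs_S hz₀ hz'₀ ho) hmono

/-! triangle-freeness -/

lemma anc_inl_inl {a b : g.V} (h : Anc g.cpar (Sum.inl a) (Sum.inl b)) : Anc g.par a b := by
  obtain ⟨w₀, he, h₀⟩ := g.anc_desc h
  rw [Sum.inl.injEq] at he
  subst he
  exact h₀

lemma anc_S_S {u a b : g.V} (h : Anc g.cpar (Sum.inr (Sum.inl (u, a))) (Sum.inr (Sum.inl (u, b)))) :
    Anc g.par a b := by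
  rcases g.anc_desc h with ⟨w₀, he, h₀⟩ | ⟨u₀, he, h₀⟩
  · simp only [Sum.inr.injEq, Sum.inl.injEq, Prod.mk.injEq] at he
    rw [he.2]
    exact h₀
  · simp at he

lemma adj_inl {a b : g.V} (h : AdjOf g.cpar g.cl g.cr (Sum.inl a) (Sum.inl b)) :
    AdjOf g.par g.l g.r a b := by
  refine ⟨h.1.imp g.anc_inl_inl g.anc_inl_inl, overlap_half_iff.1 h.2⟩

lemma adj_S {u a b : g.V}
    (h : AdjOf g.cpar g.cl g.cr (Sum.inr (Sum.inl (u, a))) (Sum.inr (Sum.inl (u, b)))) :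
    AdjOf g.par g.l g.r a b := by
  refine ⟨h.1.imp g.anc_S_S g.anc_S_S, (g.overlap_sg_iff u).1 h.2⟩

lemma c_tri_main : ∀ (w z1 z2 : CV g), Anc g.cpar z1 w → Anc g.cpar z2 w →
    IntervalOverlap (g.cl z1) (g.cr z1) (g.cl w) (g.cr w) →
    IntervalOverlap (g.cl z2) (g.cr z2) (g.cl w) (g.cr w) →
    AdjOf g.cpar g.cl g.cr z1 z2 → False := by
  rintro (w | ⟨u, w⟩ | ⟨u, v₀⟩) z1 z2 h1 h2 o1 o2 h12
  · obtain ⟨a, rfl, ha⟩ := g.anc_desc h1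
    obtain ⟨b, rfl, hb⟩ := g.anc_desc h2
    exact g.tri (g.adj_inl h12) ⟨Or.inl ha, overlap_half_iff.1 o1⟩
      ⟨Or.inl hb, overlap_half_iff.1 o2⟩
  · have hwl := g.bp_cl_S u w
    have hwr := g.bp_cr_S u w
    rcases g.anc_desc h1 with ⟨a, rfl, ha⟩ | ⟨a, rfl, ha⟩
    swap
    · exact g.no_cross_overlap hwl hwr o1
    rcases g.anc_desc h2 with ⟨b, rfl, hb⟩ | ⟨b, rfl, hb⟩
    swap
    · exact g.no_cross_overlap hwl hwr o2
    exact g.tri (g.adj_S h12) ⟨Or.inl ha, (g.overlap_sg_iff u).1 o1⟩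
      ⟨Or.inl hb, (g.overlap_sg_iff u).1 o2⟩
  · have hwl := g.bp_cl_P u v₀
    have hwr := g.bp_cr_P u v₀
    have hd1 := g.anc_desc h1
    have hd2 := g.anc_desc h2
    have getS : ∀ z : CV g, (z = Sum.inr (Sum.inl (u, v₀)) ∨ g.DescS z u v₀) →
        IntervalOverlap (g.cl z) (g.cr z) (g.cl (Sum.inr (Sum.inr (u, v₀)))) (g.cr (Sum.inr (Sum.inr (u, v₀)))) →
        ∃ a, z = Sum.inr (Sum.inl (u, a)) ∧ ChainOf g.par a v₀ := by
      intro z hz ho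
      rcases hz with rfl | hz
      · exact ⟨v₀, rfl, Or.inl rfl⟩
      · rcases hz with ⟨a, rfl, ha⟩ | ⟨a, rfl, ha⟩
        · exact ⟨a, rfl, Or.inr ha⟩
        · exact absurd ho (g.no_cross_overlap hwl hwr)
    obtain ⟨a, rfl, ha⟩ := getS _ hd1 o1
    obtain ⟨b, rfl, hb⟩ := getS _ hd2 o2
    -- both overlap the P node, but they form an overlapping pair on the chain of S (u,v₀)
    have hmin := g.c_pairs_S (g.chainS u ha) (g.chainS u hb) h12.2
    -- each cr exceeds cl of the P node
    have hclP : g.crgl (Sum.inr (Sum.inl (u, v₀))) < g.cl (Sum.inr (Sum.inr (u, v₀))) := by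
      refine g.sg_mono u ?_
      have hp := g.arg_pL v₀
      have := g.rg2 v₀
      show g.rgl v₀ < g.pL v₀
      linarith [hp.1]
    have key : ∀ c : g.V, Anc g.cpar (Sum.inr (Sum.inl (u, c))) (Sum.inr (Sum.inr (u, v₀))) →
        IntervalOverlap (g.cl (Sum.inr (Sum.inl (u, c)))) (g.cr (Sum.inr (Sum.inl (u, c))))
          (g.cl (Sum.inr (Sum.inr (u, v₀)))) (g.cr (Sum.inr (Sum.inr (u, v₀)))) →
        g.cl (Sum.inr (Sum.inr (u, v₀))) < g.cr (Sum.inr (Sum.inl (u, c))) := by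
      intro c hanc ho
      have hlt := g.c_g1 hanc
      rcases ho with ⟨q1, q2, q3⟩ | ⟨q1, q2, q3⟩
      · exact q2
      · linarith
    have k1 := key a h1 o1
    have k2 := key b h2 o2
    rw [min_lt_iff] at hmin
    rcases hmin with h | h <;> linarith

lemma c_tri : ∀ ⦃x y z : CV g⦄, AdjOf g.cpar g.cl g.cr x y → AdjOf g.cpar g.cl g.cr x z →
    AdjOf g.cpar g.cl g.cr y z → False := by
  intro x y z hxy hxz hyz
  have RK := fun {a b : CV g} (h : Anc g.cpar a b) => anc_rk g.c_rk_lt h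
  rcases hxy.1 with h1 | h1 <;> rcases hxz.1 with h2 | h2 <;> rcases hyz.1 with h3 | h3
  · exact g.c_tri_main z x y h2 h3 hxz.2 hyz.2 hxy
  · exact g.c_tri_main y x z h1 h3 hxy.2 (intervalOverlap_symm hyz.2) hxz
  · have := RK h1; have := RK h2; have := RK h3; omega
  · exact g.c_tri_main y x z h1 h3 hxy.2 (intervalOverlap_symm hyz.2) hxz
  · exact g.c_tri_main z x y h2 h3 hxz.2 hyz.2 hxy
  · have := RK h1; have := RK h2; have := RK h3; omega
  · exact g.c_tri_main x y z h1 h2 (intervalOverlap_symm hxy.2) (intervalOverlap_symm hxz.2) hyz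
  · exact g.c_tri_main x y z h1 h2 (intervalOverlap_symm hxy.2) (intervalOverlap_symm hxz.2) hyz

lemma c_rk_bd : ∀ v : CV g, g.crk v < Fintype.card (CV g) := by
  have hN : 0 < Fintype.card g.V := @Fintype.card_pos _ _ g.nem
  have hM : Fintype.card g.V ≤ Fintype.card g.V * Fintype.card g.V :=
    Nat.le_mul_of_pos_left _ hN
  have hcard : Fintype.card (CV g) =
      Fintype.card g.V + (Fintype.card g.V * Fintype.card g.V +
        Fintype.card g.V * Fintype.card g.V) := by
    simp [Fintype.card_sum, Fintype.card_prod]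
  rintro (w | ⟨u, w⟩ | ⟨u, v⟩) <;> simp only [crk] <;> rw [hcard]
  · have := g.rk_bd w; omega
  · have := g.rk_bd w; omega
  · omega

/-! the forcing argument for the composed gadget -/

lemma adjF {a b : g.V} (h : AdjOf g.par g.l g.r a b) :
    AdjOf g.cpar g.cl g.cr (Sum.inl a) (Sum.inl b) :=
  ⟨h.1.imp g.ancF g.ancF, overlap_half_iff.2 h.2⟩

lemma adjS (u : g.V) {a b : g.V} (h : AdjOf g.par g.l g.r a b) :
    AdjOf g.cpar g.cl g.cr (Sum.inr (Sum.inl (u, a))) (Sum.inr (Sum.inl (u, b))) :=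
  ⟨h.1.imp (g.ancS u) (g.ancS u), (g.overlap_sg_iff u).2 h.2⟩

lemma chain_inl_SP (u₀ u w : g.V) (h : ChainOf g.par u₀ u) :
    ChainOf g.cpar (Sum.inl u₀) (Sum.inr (Sum.inl (u, w))) :=
  Or.inr (g.desc_ancS (Or.inr ⟨u₀, rfl, h⟩))

lemma anc_SP {a u v : g.V} (h : ChainOf g.par a v) :
    Anc g.cpar (Sum.inr (Sum.inl (u, a))) (Sum.inr (Sum.inr (u, v))) := by
  refine g.desc_anc ?_
  rcases h with rfl | h
  · exact Or.inl rfl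
  · exact Or.inr (Or.inl ⟨a, rfl, h⟩)

lemma anc_inl_P {a u v : g.V} (h : ChainOf g.par a u) :
    Anc g.cpar (Sum.inl a) (Sum.inr (Sum.inr (u, v))) :=
  g.desc_anc (Or.inr (Or.inr ⟨a, rfl, h⟩))

lemma c_forcing : ∀ φ : CV g → ℕ,
    (∀ x y, AdjOf g.cpar g.cl g.cr x y → φ x ≠ φ y) →
    ∃ (o : CV g) (K : Finset (CV g)),
      (∀ z ∈ K, ChainOf g.cpar z o) ∧
      (∀ z ∈ K, g.cl z < g.crgl o ∧ g.crgr o < g.cr z) ∧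
      (∀ z, ChainOf g.cpar z o → z ∉ K → g.cr z < g.crgl o) ∧
      j + 1 ≤ (K.image φ).card := by
  intro φ hφ
  -- first copy: F
  obtain ⟨o₁, K₁, hc₁, hr₁, hj₁, hcard₁⟩ :=
    g.forcing (φ ∘ Sum.inl) (fun a b h => hφ _ _ (g.adjF h))
  -- second copy: S o₁
  obtain ⟨o₂, K₂, hc₂, hr₂, hj₂, hcard₂⟩ :=
    g.forcing (φ ∘ (fun w => Sum.inr (Sum.inl (o₁, w)))) (fun a b h => hφ _ _ (g.adjS o₁ h))
  set KI : Finset (CV g) := K₁.image Sum.inl with hKI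
  set KJ : Finset (CV g) := K₂.image (fun w => Sum.inr (Sum.inl (o₁, w))) with hKJ
  have hIim : KI.image φ = K₁.image (φ ∘ Sum.inl) := Finset.image_image
  have hJim : KJ.image φ = K₂.image (φ ∘ (fun w => Sum.inr (Sum.inl (o₁, w)))) :=
    Finset.image_image
  by_cases hbig : j + 1 ≤ ((KI ∪ KJ).image φ).card
  · -- case A : output the S node
    refine ⟨Sum.inr (Sum.inl (o₁, o₂)), KI ∪ KJ, ?_, ?_, ?_, hbig⟩
    · intro z hz
      rcases Finset.mem_union.1 hz with hz | hz
      · obtain ⟨a, ha, rfl⟩ := Finset.mem_image.1 hz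
        exact g.chain_inl_SP a o₁ o₂ (hc₁ a ha)
      · obtain ⟨a, ha, rfl⟩ := Finset.mem_image.1 hz
        exact g.chainS o₁ (hc₂ a ha)
    · intro z hz
      have hbl := g.bp_mem (g.bp_crgl_S o₁ o₂)
      have hbr := g.bp_mem (g.bp_crgr_S o₁ o₂)
      rcases Finset.mem_union.1 hz with hz | hz
      · obtain ⟨a, ha, rfl⟩ := Finset.mem_image.1 hz
        obtain ⟨q1, q2⟩ := hr₁ a ha
        constructor
        · show g.l a / 2 < _; linarith [hbl.1]
        · show _ < g.r a / 2; linarith [hbr.2]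
      · obtain ⟨a, ha, rfl⟩ := Finset.mem_image.1 hz
        obtain ⟨q1, q2⟩ := hr₂ a ha
        constructor
        · exact g.sg_mono o₁ q1
        · refine g.sg_mono o₁ ?_
          have := g.rg2 o₂
          show (g.rgl o₂ + g.rgr o₂) / 2 < g.r a
          linarith
    · intro z hz hzK
      have hbl := g.bp_mem (g.bp_crgl_S o₁ o₂)
      rcases g.chain_S hz with ⟨a, rfl, ha⟩ | ⟨a, rfl, ha⟩
      · have haK : a ∉ K₂ := by
          intro hmem
          exact hzK (Finset.mem_union_right _ (Finset.mem_image_of_mem _ hmem))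
        exact g.sg_mono o₁ (hj₂ a ha haK)
      · have haK : a ∉ K₁ := by
          intro hmem
          exact hzK (Finset.mem_union_left _ (Finset.mem_image_of_mem _ hmem))
        have := hj₁ a ha haK
        show g.r a / 2 < _
        linarith [hbl.1]
  · -- case B : output the P node
    push_neg at hbig
    set P₀ : CV g := Sum.inr (Sum.inr (o₁, o₂)) with hP₀
    have himage_eq : KJ.image φ = KI.image φ := by
      have hU : (KI ∪ KJ).image φ = KI.image φ ∪ KJ.image φ := Finset.image_union _ _
      have hIsub : KI.image φ ⊆ (KI ∪ KJ).image φ := by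
        rw [hU]; exact Finset.subset_union_left
      have hJsub : KJ.image φ ⊆ (KI ∪ KJ).image φ := by
        rw [hU]; exact Finset.subset_union_right
      have hIcard : j ≤ (KI.image φ).card := by rw [hIim]; exact hcard₁
      have hJcard : j ≤ (KJ.image φ).card := by rw [hJim]; exact hcard₂
      have hIeq : KI.image φ = (KI ∪ KJ).image φ :=
        Finset.eq_of_subset_of_card_le hIsub (by omega)
      have hJeq : KJ.image φ = (KI ∪ KJ).image φ :=
        Finset.eq_of_subset_of_card_le hJsub (by omega)
      rw [hIeq, hJeq]
    -- the P node is adjacent to every member of K₂'s image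
    have hPadj : ∀ a ∈ K₂, AdjOf g.cpar g.cl g.cr (Sum.inr (Sum.inl (o₁, a))) P₀ := by
      intro a ha
      obtain ⟨q1, q2⟩ := hr₂ a ha
      refine ⟨Or.inl (g.anc_SP (hc₂ a ha)), Or.inl ⟨?_, ?_, ?_⟩⟩
      · refine g.sg_mono o₁ ?_
        have hp := g.arg_pL o₂
        have := g.rg2 o₂
        show g.l a < g.pL o₂
        linarith [hp.1]
      · refine g.sg_mono o₁ ?_
        have hp := g.arg_pL o₂
        show g.pL o₂ < g.r a
        linarith [hp.2]
      · refine g.sg_mono o₁ ?_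
        have h2 := g.r_half a
        have h3 := g.sv_gt_half o₂
        have h4 := g.dv_pos o₂
        show g.r a < g.sv o₂ + g.dv o₂ / 2
        linarith
    have hPnew : φ P₀ ∉ KI.image φ := by
      rw [← himage_eq, hJim]
      intro hmem
      obtain ⟨a, ha, he⟩ := Finset.mem_image.1 hmem
      exact hφ _ _ (hPadj a ha) he
    refine ⟨P₀, insert P₀ KI, ?_, ?_, ?_, ?_⟩
    · intro z hz
      rcases Finset.mem_insert.1 hz with rfl | hz
      · exact Or.inl rfl
      · obtain ⟨a, ha, rfl⟩ := Finset.mem_image.1 hz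
        exact Or.inr (g.anc_inl_P (hc₁ a ha))
    · intro z hz
      have hbl := g.bp_mem (g.bp_crgl_P o₁ o₂)
      have hbr := g.bp_mem (g.bp_crgr_P o₁ o₂)
      rcases Finset.mem_insert.1 hz with rfl | hz
      · exact ⟨g.c_rg1 _, g.c_rg3 _⟩
      · obtain ⟨a, ha, rfl⟩ := Finset.mem_image.1 hz
        obtain ⟨q1, q2⟩ := hr₁ a ha
        constructor
        · show g.l a / 2 < _; linarith [hbl.1]
        · show _ < g.r a / 2; linarith [hbr.2]
    · intro z hz hzK
      have hbl := g.bp_mem (g.bp_crgl_P o₁ o₂)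
      rcases g.chain_P hz with rfl | hz₀
      · exact absurd (Finset.mem_insert_self _ _) hzK
      · rcases g.chain_S hz₀ with ⟨a, rfl, ha⟩ | ⟨a, rfl, ha⟩
        · refine g.sg_mono o₁ ?_
          have h2 := g.r_half a
          have h3 := g.sv_gt_half o₂
          have h4 := g.dv_pos o₂
          show g.r a < g.sv o₂ + g.dv o₂ / 8
          linarith
        · have haK : a ∉ K₁ := by
            intro hmem
            exact hzK (Finset.mem_insert_of_mem (Finset.mem_image_of_mem _ hmem))
          have := hj₁ a ha haK
          show g.r a / 2 < _
          linarith [hbl.1]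
    · rw [Finset.image_insert, Finset.card_insert_of_notMem hPnew, hIim]
      omega


noncomputable def compose : Gad (j + 1) where
  V := CV g
  fin := inferInstance
  dec := inferInstance
  nem := ⟨Sum.inl (Classical.choice g.nem)⟩
  par := g.cpar
  rk := g.crk
  rk_lt := g.c_rk_lt
  rk_bd := g.c_rk_bd
  l := g.cl
  r := g.cr
  rgl := g.crgl
  rgr := g.crgr
  l_pos := g.c_l_pos
  r_half := g.c_r_half
  rg1 := g.c_rg1
  rg2 := g.c_rg2
  rg3 := g.c_rg3
  l_inj := g.c_l_inj
  r_inj := g.c_r_inj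
  lr_ne := g.c_lr_ne
  rg_disj := g.c_rg_disj
  l_empty := g.c_l_empty
  r_empty := g.c_r_empty
  g1 := g.c_g1
  chain_l := g.c_chain_l
  pairs := g.c_pairs
  tri := g.c_tri
  forcing := g.c_forcing

def nverts : ℕ := @Fintype.card g.V g.fin

lemma nverts_compose :
    (Gad.compose g).nverts = g.nverts + (g.nverts * g.nverts + g.nverts * g.nverts) := by
  show Fintype.card (CV g) = _
  simp [nverts, Fintype.card_sum, Fintype.card_prod]

lemma nverts_pos : 0 < g.nverts := @Fintype.card_pos _ g.fin g.nem

end Compose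

noncomputable def gadget : (j : ℕ) → Gad (j + 1)
  | 0 => base
  | j + 1 => Gad.compose (gadget j)

lemma gadget_card : ∀ j : ℕ, (gadget j).nverts ≤ 3 ^ (2 ^ j - 1) := by
  intro j
  induction j with
  | zero =>
    show Fintype.card Unit ≤ _
    simp
  | succ j ih =>
    have hpos := (gadget j).nverts_pos
    have h2 : 1 ≤ 2 ^ j := Nat.one_le_two_pow
    rw [show gadget (j+1) = Gad.compose (gadget j) from rfl, nverts_compose]
    set n := (gadget j).nverts
    have hb : n + (n * n + n * n) ≤ 3 * (n * n) := by nlinarith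
    calc n + (n * n + n * n) ≤ 3 * (n * n) := hb
      _ ≤ 3 * (3 ^ (2 ^ j - 1) * 3 ^ (2 ^ j - 1)) := by
          have := Nat.mul_le_mul ih ih
          omega
      _ = 3 ^ (1 + ((2 ^ j - 1) + (2 ^ j - 1))) := by rw [pow_add, pow_add, pow_one]
      _ ≤ 3 ^ (2 ^ (j + 1) - 1) := by
          refine Nat.pow_le_pow_right (by norm_num) ?_
          have : 2 ^ (j + 1) = 2 ^ j + 2 ^ j := by ring
          omega

end Gad

/-- For every `k ≥ 1` there is a triangle-free overlap game graph with at most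
`2 ^ 2 ^ (2 * k)` vertices and chromatic number at least `k`. -/
theorem stmt8 (k : ℕ) (hk : 1 ≤ k) :
    ∃ (n : ℕ) (G : SimpleGraph (Fin n)) (M : RootedForest (Fin n)) (μl μr : Fin n → ℝ),
      IsOGG G M μl μr ∧ G.CliqueFree 3 ∧ n ≤ 2 ^ 2 ^ (2 * k) ∧
      (k : ℕ∞) ≤ G.chromaticNumber := by
  classical
  set g := Gad.gadget (k - 1) with hg
  letI : Fintype g.V := g.fin
  letI : DecidableEq g.V := g.dec
  set n := Fintype.card g.V with hn
  set e : g.V ≃ Fin n := Fintype.equivFin g.V with he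
  set par' : Fin n → Option (Fin n) := fun x => (g.par (e.symm x)).map e with hpar
  have hstep : ∀ x y : Fin n, par' y = some x ↔ g.par (e.symm y) = some (e.symm x) := by
    intro x y
    constructor
    · intro h
      simp only [hpar, Option.map_eq_some_iff] at h
      obtain ⟨w, hw, rfl⟩ := h
      simpa using hw
    · intro h
      have : e (e.symm x) = x := e.apply_symm_apply x
      simp [hpar, h, this]
  have hancM : ∀ x y : Fin n, Anc par' x y ↔ Anc g.par (e.symm x) (e.symm y) := by
    intro x y
    constructor
    · intro h
      exact Relation.TransGen.lift (r := fun x y : Fin n => par' y = some x) (p := fun x y => g.par y = some x) e.symm (fun a b hab => (hstep a b).1 hab) _ _ h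
    · intro h
      have h2 := Relation.TransGen.lift (r := fun x y => g.par y = some x) (p := fun x y : Fin n => par' y = some x) e
        (fun a b hab => by
          show par' (e b) = some (e a)
          simp [hpar, hab]) _ _ h
      simpa [Function.onFun, Anc] using h2
  have hacyc : ∀ v : Fin n, ¬ Relation.TransGen (fun x y => par' y = some x) v v := by
    intro v hv
    have : Anc g.par (e.symm v) (e.symm v) := (hancM v v).1 hv
    exact anc_irrefl g.rk_lt _ this
  set M : RootedForest (Fin n) := ⟨par', hacyc⟩ with hM
  set μl : Fin n → ℝ := fun x => g.l (e.symm x) with hμl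
  set μr : Fin n → ℝ := fun x => g.r (e.symm x) with hμr
  have hsymm : ∀ x y : Fin n,
      ((Anc par' x y ∨ Anc par' y x) ∧ IntervalOverlap (μl x) (μr x) (μl y) (μr y)) →
      ((Anc par' y x ∨ Anc par' x y) ∧ IntervalOverlap (μl y) (μr y) (μl x) (μr x)) :=
    fun x y h => ⟨h.1.symm, intervalOverlap_symm h.2⟩
  set G : SimpleGraph (Fin n) :=
    { Adj := fun x y => (Anc par' x y ∨ Anc par' y x) ∧
        IntervalOverlap (μl x) (μr x) (μl y) (μr y)
      symm := ⟨hsymm⟩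
      loopless := ⟨by
        rintro x ⟨_, (⟨h, _, _⟩ | ⟨h, _, _⟩)⟩ <;> exact lt_irrefl _ h⟩ } with hG
  have hadj : ∀ x y : Fin n, G.Adj x y ↔ AdjOf g.par g.l g.r (e.symm x) (e.symm y) := by
    intro x y
    show ((Anc par' x y ∨ Anc par' y x) ∧ _) ↔ _
    rw [hancM, hancM]
    exact Iff.rfl
  have hManc : ∀ x y : Fin n, M.anc x y ↔ Anc g.par (e.symm x) (e.symm y) := hancM
  refine ⟨n, G, M, μl, μr, ?_, ?_, ?_, ?_⟩
  · refine ⟨fun v => g.lt_lr _, fun v w => g.lr_ne _ _,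
      fun v w hne h => hne (e.symm.injective (g.l_inj h)),
      fun v w hne h => hne (e.symm.injective (g.r_inj h)),
      fun x y h => g.g1 ((hManc x y).1 h), fun x y => Iff.rfl, ?_⟩
    rintro ⟨x, y, z, h1, h2, h3, h4⟩
    have h1' : Anc g.par (e.symm x) (e.symm y) := (hManc _ _).1 h1
    have h2' : Anc g.par (e.symm y) (e.symm z) := (hManc _ _).1 h2
    have hxz : ChainOf g.par (e.symm x) (e.symm z) := Or.inr (h1'.trans h2')
    have hyz : ChainOf g.par (e.symm y) (e.symm z) := Or.inr h2'
    have hmin := g.pairs hxz hyz h3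
    have hsub1 : Set.Icc (μl z) (μr z) ⊆ Set.Icc (μl x) (μr x) :=
      fun t ht => (Set.subset_inter_iff.1 h4).1 ht
    have hsub2 : Set.Icc (μl z) (μr z) ⊆ Set.Icc (μl y) (μr y) :=
      fun t ht => (Set.subset_inter_iff.1 h4).2 ht
    rw [Set.Icc_subset_Icc_iff (le_of_lt (g.lt_lr _))] at hsub1 hsub2
    have hr1 := g.rg1 (e.symm z)
    have hr2 := g.rg2 (e.symm z)
    have hr3 := g.rg3 (e.symm z)
    rw [min_lt_iff] at hmin
    rcases hmin with h | h
    · have := hsub1.2; show False; simp only [hμr] at this; linarith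
    · have := hsub2.2; show False; simp only [hμr] at this; linarith
  · intro t ht
    obtain ⟨a, b, c, hab, hac, hbc, rfl⟩ := Finset.card_eq_three.1 ht.2
    have h1 : G.Adj a b := ht.1 (by simp) (by simp) hab
    have h2 : G.Adj a c := ht.1 (by simp) (by simp) hac
    have h3 : G.Adj b c := ht.1 (by simp) (by simp) hbc
    exact g.tri ((hadj _ _).1 h1) ((hadj _ _).1 h2) ((hadj _ _).1 h3)
  · have h1 := Gad.gadget_card (k - 1)
    have hnn : n = g.nverts := rfl
    have h2k : 1 ≤ 2 ^ (k - 1) := Nat.one_le_two_pow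
    have hexp : 2 * (2 ^ (k - 1) - 1) ≤ 2 ^ (2 * k) := by
      have e1 : 2 ^ k = 2 ^ (k - 1) * 2 := by
        rw [← pow_succ]
        congr 1
        omega
      have e2 : 2 ^ k ≤ 2 ^ (2 * k) := Nat.pow_le_pow_right (by norm_num) (by omega)
      omega
    calc n = g.nverts := hnn
      _ ≤ 3 ^ (2 ^ (k - 1) - 1) := h1
      _ ≤ 4 ^ (2 ^ (k - 1) - 1) := Nat.pow_le_pow_left (by norm_num) _
      _ = 2 ^ (2 * (2 ^ (k - 1) - 1)) := by
          rw [pow_mul]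
          norm_num
      _ ≤ 2 ^ 2 ^ (2 * k) := Nat.pow_le_pow_right (by norm_num) hexp
  · have hnocol : ¬ G.Colorable (k - 1) := by
      rintro ⟨C⟩
      have hproper : ∀ a b : g.V, AdjOf g.par g.l g.r a b →
          (fun v => ((C (e v)) : ℕ)) a ≠ (fun v => ((C (e v)) : ℕ)) b := by
        intro a b hA hEq
        have hA' : G.Adj (e a) (e b) := by
          refine (hadj _ _).2 ?_
          simpa using hA
        exact C.valid hA' (Fin.val_injective hEq)
      obtain ⟨o, K, _, _, _, hcard⟩ := g.forcing (fun v => ((C (e v)) : ℕ)) hproper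
      have hsub : K.image (fun v => ((C (e v)) : ℕ)) ⊆ Finset.range (k - 1) := by
        intro m hm
        obtain ⟨a, _, rfl⟩ := Finset.mem_image.1 hm
        exact Finset.mem_range.2 (C (e a)).2
      have hle := Finset.card_le_card hsub
      rw [Finset.card_range] at hle
      omega
    rw [← SimpleGraph.chromaticNumber_le_iff_colorable] at hnocol
    have hlt : ((k - 1 : ℕ) : ℕ∞) < G.chromaticNumber := lt_of_not_ge hnocol
    have hle := Order.add_one_le_of_lt hlt
    have hcast : ((k - 1 : ℕ) : ℕ∞) + 1 = (k : ℕ∞) := by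
      rw [show ((1:ℕ∞)) = ((1:ℕ):ℕ∞) from rfl, ← Nat.cast_add, Nat.sub_add_cancel hk]
    rwa [hcast] at hle
end
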